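/- arXiv:1005.5185 — 3 statements merged into one kernel-verified Lean document; each statement's English description precedes it below -/
import Mathlib

section
/- The set of images under the quotient map π_B of the pure tensors that contain no factor from R' (i.e., π_B(⟨X⟩ ∖ ⟨R'⟩)) is a K-vector-space basis of the algebra B. -/
noncomputable section

inductive Gen (n : ℕ) : Type
  | a : Fin (n+1) → Gen n
  | b : Fin (n+1) → Gen n
  | c : Fin (n+1) → Gen n

variable (K : Type) [Field K] (n : ℕ)

/-- The tensor algebra `T(V)` on the span of the generators, i.e. the free algebra. -/
abbrev FA := FreeAlgebra K (Gen n)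

/-- `a_i`, with the convention that out-of-range indices give `0`. -/
def ga (i : ℤ) : FA K n :=
  if h : 0 ≤ i ∧ i ≤ (n : ℤ) then FreeAlgebra.ι K (Gen.a ⟨i.toNat, by omega⟩) else 0

def gb (i : ℤ) : FA K n :=
  if h : 0 ≤ i ∧ i ≤ (n : ℤ) then FreeAlgebra.ι K (Gen.b ⟨i.toNat, by omega⟩) else 0

def gc (i : ℤ) : FA K n :=
  if h : 0 ≤ i ∧ i ≤ (n : ℤ) then FreeAlgebra.ι K (Gen.c ⟨i.toNat, by omega⟩) else 0

/-- The set `R` of defining relations. -/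
def rels : Set (FA K n) :=
  { x | x = ga K n n * gb K n n * gc K n n ∨ x = gc K n 0 * ga K n 0 ∨
      ∃ i : ℕ, i < n ∧
        (x = ga K n i * gb K n i * gc K n i + gc K n (i+1) * ga K n (i+1) * gb K n (i+1) ∨
         x = gb K n (i+1) * gc K n (i+1) * ga K n (i+1) ∨
         x = gc K n i * gc K n (i+1) ∨
         x = gb K n (i+1) * ga K n i) }

/-- The relation whose ring-quotient is `B = T(V)/⟨R⟩`. -/
def BRel (x y : FA K n) : Prop := x ∈ rels K n ∧ y = 0

/-- The algebra `B = T(V)/⟨R⟩`. -/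
abbrev B := RingQuot (BRel K n)

/-- The quotient map `π_B : T(V) → B`. -/
def πB : FA K n →ₐ[K] B K n := RingQuot.mkAlgHom K (BRel K n)

/-- The image of `a_i` in `B` (zero for out-of-range indices). -/
def aB (i : ℤ) : B K n := πB K n (ga K n i)
def bB (i : ℤ) : B K n := πB K n (gb K n i)
def cB (i : ℤ) : B K n := πB K n (gc K n i)

/-- The left annihilator of `x`, as a left ideal of `B`. -/
def lann (x : B K n) : Ideal (B K n) where
  carrier := {w | w * x = 0}
  add_mem' := by
    intro a b ha hb
    simp only [Set.mem_setOf_eq, add_mul] at *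
    rw [ha, hb, add_zero]
  zero_mem' := by simp
  smul_mem' := by
    intro c w hw
    simp only [Set.mem_setOf_eq, smul_eq_mul, mul_assoc] at *
    rw [hw, mul_zero]

end

/-- The pure tensor in `T(V)` corresponding to a word in the generators. -/
def word (K : Type) [Field K] (n : ℕ) (l : List (Gen n)) : FA K n :=
  (l.map (FreeAlgebra.ι K)).prod

/-- The set `R'` of forbidden subwords, as words in the generators. -/
def Rwords' (n : ℕ) : Set (List (Gen n)) :=
  { l | l = [Gen.a (Fin.last n), Gen.b (Fin.last n), Gen.c (Fin.last n)] ∨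
        l = [Gen.c 0, Gen.a 0] ∨
        ∃ i : Fin n,
          l = [Gen.c i.succ, Gen.a i.succ, Gen.b i.succ] ∨
          l = [Gen.b i.succ, Gen.c i.succ, Gen.a i.succ] ∨
          l = [Gen.c i.castSucc, Gen.c i.succ] ∨
          l = [Gen.b i.succ, Gen.a i.castSucc] }


namespace Stmt0

open Finsupp

variable {n : ℕ}

/-- Forbidden words of length 2. -/
def P2 : Gen n → Gen n → Prop
  | Gen.c j, Gen.a k => j = 0 ∧ k = 0
  | Gen.c j, Gen.c k => (k : ℕ) = (j : ℕ) + 1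
  | Gen.b j, Gen.a k => (j : ℕ) = (k : ℕ) + 1
  | _, _ => False

/-- Forbidden words of length 3. -/
def P3 : Gen n → Gen n → Gen n → Prop
  | Gen.a j, Gen.b k, Gen.c m => j = k ∧ k = m ∧ j = Fin.last n
  | Gen.c j, Gen.a k, Gen.b m => j = k ∧ k = m ∧ j ≠ 0
  | Gen.b j, Gen.c k, Gen.a m => j = k ∧ k = m ∧ j ≠ 0
  | _, _, _ => False

/-- A word is reducible if it contains a forbidden subword. -/
def Red (l : List (Gen n)) : Prop := ∃ w ∈ Rwords' n, w <:+: l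

lemma mem_iff {w : List (Gen n)} :
    w ∈ Rwords' n ↔ ((∃ x y, w = [x, y] ∧ P2 x y) ∨ ∃ x y z, w = [x, y, z] ∧ P3 x y z) := by
  constructor
  · intro hw
    rcases hw with h | h | ⟨i, h | h | h | h⟩ <;> subst h
    · exact Or.inr ⟨_, _, _, rfl, rfl, rfl, rfl⟩
    · exact Or.inl ⟨_, _, rfl, rfl, rfl⟩
    · exact Or.inr ⟨_, _, _, rfl, rfl, rfl, Fin.succ_ne_zero i⟩
    · exact Or.inr ⟨_, _, _, rfl, rfl, rfl, Fin.succ_ne_zero i⟩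
    · exact Or.inl ⟨_, _, rfl, by simp [P2]⟩
    · exact Or.inl ⟨_, _, rfl, by simp [P2]⟩
  · rintro (⟨x, y, rfl, hp⟩ | ⟨x, y, z, rfl, hp⟩)
    · rcases x with j | j | j <;> rcases y with k | k | k <;> simp only [P2] at hp <;>
        try exact absurd hp not_false
      · -- b j, a k  with j = k + 1
        refine Or.inr (Or.inr ⟨⟨(k : ℕ), by omega⟩, Or.inr (Or.inr (Or.inr ?_))⟩)
        have h1 : Gen.b j = Gen.b (n := n) (Fin.succ ⟨(k : ℕ), by omega⟩) := by
          congr 1; apply Fin.ext; rw [Fin.val_succ]; exact hp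
        have h2 : Gen.a k = Gen.a (n := n) (Fin.castSucc ⟨(k : ℕ), by omega⟩) := by
          congr 1 <;> (apply Fin.ext; simp)
        rw [h1, h2]
      · -- c 0, a 0
        exact Or.inr (Or.inl (by rw [hp.1, hp.2]))
      · -- c j, c k with k = j + 1
        refine Or.inr (Or.inr ⟨⟨(j : ℕ), by omega⟩, Or.inr (Or.inr (Or.inl ?_))⟩)
        have h1 : Gen.c j = Gen.c (n := n) (Fin.castSucc ⟨(j : ℕ), by omega⟩) := by
          congr 1 <;> (apply Fin.ext; simp)
        have h2 : Gen.c k = Gen.c (n := n) (Fin.succ ⟨(j : ℕ), by omega⟩) := by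
          congr 1; apply Fin.ext; rw [Fin.val_succ]; exact hp
        conv_lhs => rw [h1, h2]
    · rcases x with j | j | j <;> rcases y with k | k | k <;> rcases z with m | m | m <;>
        simp only [P3] at hp <;> try exact absurd hp not_false
      · obtain ⟨rfl, rfl, rfl⟩ := hp
        exact Or.inl rfl
      · -- b j, c j, a j with j ≠ 0
        obtain ⟨rfl, rfl, hj⟩ := hp
        have hj' : (j : ℕ) ≠ 0 := fun h => hj (Fin.ext (by rw [h, Fin.val_zero]))
        refine Or.inr (Or.inr ⟨⟨(j : ℕ) - 1, by omega⟩, Or.inr (Or.inl ?_)⟩)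
        have h1 : j = Fin.succ (n := n) ⟨(j : ℕ) - 1, by omega⟩ := by
          apply Fin.ext; rw [Fin.val_succ]; simp; omega
        conv_lhs => rw [h1]
      · -- c j, a j, b j with j ≠ 0
        obtain ⟨rfl, rfl, hj⟩ := hp
        have hj' : (j : ℕ) ≠ 0 := fun h => hj (Fin.ext (by rw [h, Fin.val_zero]))
        refine Or.inr (Or.inr ⟨⟨(j : ℕ) - 1, by omega⟩, Or.inl ?_⟩)
        have h1 : j = Fin.succ (n := n) ⟨(j : ℕ) - 1, by omega⟩ := by
          apply Fin.ext; rw [Fin.val_succ]; simp; omega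
        conv_lhs => rw [h1]

lemma red_cons {x : Gen n} {l : List (Gen n)} :
    Red (x :: l) ↔ Red l ∨ (∃ y t, l = y :: t ∧ P2 x y) ∨
      (∃ y z t, l = y :: z :: t ∧ P3 x y z) := by
  constructor
  · rintro ⟨w, hw, hinf⟩
    rcases List.infix_cons_iff.mp hinf with hpre | hinf'
    · rcases mem_iff.mp hw with ⟨u, v, rfl, hp⟩ | ⟨u, v, z, rfl, hp⟩
      · rcases List.cons_prefix_cons.mp hpre with ⟨rfl, h2⟩
        obtain ⟨t, ht⟩ := h2
        exact Or.inr (Or.inl ⟨v, t, ht.symm, hp⟩)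
      · rcases List.cons_prefix_cons.mp hpre with ⟨rfl, h2⟩
        obtain ⟨t, ht⟩ := h2
        exact Or.inr (Or.inr ⟨v, z, t, ht.symm, hp⟩)
    · exact Or.inl ⟨w, hw, hinf'⟩
  · rintro (⟨w, hw, hinf⟩ | ⟨y, t, rfl, hp⟩ | ⟨y, z, t, rfl, hp⟩)
    · exact ⟨w, hw, hinf.trans (List.suffix_cons x l).isInfix⟩
    · exact ⟨[x, y], mem_iff.mpr (Or.inl ⟨x, y, rfl, hp⟩), ⟨[], t, rfl⟩⟩
    · exact ⟨[x, y, z], mem_iff.mpr (Or.inr ⟨x, y, z, rfl, hp⟩), ⟨[], t, rfl⟩⟩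

lemma red_nil : ¬ Red ([] : List (Gen n)) := by
  rintro ⟨w, hw, hinf⟩
  rw [List.infix_nil] at hinf
  subst hinf
  rcases mem_iff.mp hw with ⟨x, y, h, -⟩ | ⟨x, y, z, h, -⟩ <;> simp at h

lemma red_single {x : Gen n} : ¬ Red [x] := by
  rw [red_cons]
  rintro (h | ⟨y, t, h, -⟩ | ⟨y, z, t, h, -⟩)
  · exact red_nil h
  all_goals simp at h

lemma irr_tail {x : Gen n} {l : List (Gen n)} (h : ¬ Red (x :: l)) : ¬ Red l :=
  fun hr => h (red_cons.mpr (Or.inl hr))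

lemma irr_cons {x : Gen n} {l : List (Gen n)} (h1 : ¬ Red l)
    (h2 : ∀ y t, l = y :: t → ¬ P2 x y)
    (h3 : ∀ y z t, l = y :: z :: t → ¬ P3 x y z) : ¬ Red (x :: l) := by
  rw [red_cons]
  rintro (h | ⟨y, t, ht, hp⟩ | ⟨y, z, t, ht, hp⟩)
  · exact h1 h
  · exact h2 y t ht hp
  · exact h3 y z t ht hp

lemma red2 {x y : Gen n} (t : List (Gen n)) (h : P2 x y) : Red (x :: y :: t) :=
  red_cons.mpr (Or.inr (Or.inl ⟨y, t, rfl, h⟩))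

lemma red3 {x y z : Gen n} (t : List (Gen n)) (h : P3 x y z) : Red (x :: y :: z :: t) :=
  red_cons.mpr (Or.inr (Or.inr ⟨y, z, t, rfl, h⟩))

lemma red_tail {l : List (Gen n)} (x : Gen n) (h : Red l) : Red (x :: l) :=
  red_cons.mpr (Or.inl h)

end Stmt0

namespace Stmt0

variable {n : ℕ}

/-- Irreducible words: the index type of the basis. -/
abbrev IW (n : ℕ) := {l : List (Gen n) // ¬ ∃ w ∈ Rwords' n, w <:+: l}

section

variable (K : Type) [Field K]

/-- The free module on irreducible words. -/
abbrev M (n : ℕ) := IW n →₀ K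

/-- Decrement of an index. -/
def dn (j : Fin (n + 1)) : Fin (n + 1) := ⟨(j : ℕ) - 1, by omega⟩

open Classical in
/-- The value of the reduction when the word `g :: l` is reducible. -/
noncomputable def fsub : Gen n → List (Gen n) → M K n
  | Gen.c j, Gen.a j1 :: Gen.b j2 :: rest =>
    if j1 = j ∧ j2 = j ∧ j ≠ 0 then
      if h2 : ¬ Red (Gen.a (dn j) :: Gen.b (dn j) :: Gen.c (dn j) :: rest) then
        -Finsupp.single ⟨Gen.a (dn j) :: Gen.b (dn j) :: Gen.c (dn j) :: rest, h2⟩ 1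
      else 0
    else 0
  | _, _ => 0

open Classical in
/-- Normal form of `g :: l` for `l` irreducible. -/
noncomputable def f (g : Gen n) (l : List (Gen n)) : M K n :=
  if h : Red (g :: l) then fsub K g l else Finsupp.single ⟨g :: l, h⟩ 1

lemma f_irr {g : Gen n} {l : List (Gen n)} (h : ¬ Red (g :: l)) :
    f K g l = Finsupp.single ⟨g :: l, h⟩ 1 := by
  rw [f, dif_neg h]

lemma f_red {g : Gen n} {l : List (Gen n)} (h : Red (g :: l)) :
    f K g l = fsub K g l := by
  rw [f, dif_pos h]

lemma fsub_zero {g : Gen n} {l : List (Gen n)}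
    (h : ∀ (j : Fin (n + 1)) (rest : List (Gen n)),
      j ≠ 0 → g = Gen.c j → l = Gen.a j :: Gen.b j :: rest → False) :
    fsub K g l = 0 := by
  rcases g with j | j | j
  · rcases l with _ | ⟨x, t⟩ <;> simp [fsub]
  · rcases l with _ | ⟨x, t⟩ <;> simp [fsub]
  · rcases l with _ | ⟨x, t⟩
    · simp [fsub]
    rcases x with k | k | k
    · rcases t with _ | ⟨y, t'⟩
      · simp [fsub]
      rcases y with m | m | m
      · simp [fsub]
      · -- potential CAB pattern
        by_cases hc : k = j ∧ m = j ∧ j ≠ 0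
        · obtain ⟨rfl, rfl, hj⟩ := hc
          exact (h _ t' hj rfl rfl).elim
        · simp only [fsub, if_neg hc]
      · simp [fsub]
    · simp [fsub]
    · simp [fsub]

open Classical in
lemma fsub_cab {j : Fin (n + 1)} (hj : j ≠ 0) (rest : List (Gen n)) :
    fsub K (Gen.c j) (Gen.a j :: Gen.b j :: rest) =
      if h2 : ¬ Red (Gen.a (dn j) :: Gen.b (dn j) :: Gen.c (dn j) :: rest) then
        -Finsupp.single ⟨Gen.a (dn j) :: Gen.b (dn j) :: Gen.c (dn j) :: rest, h2⟩ 1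
      else 0 := by
  simp [fsub, hj]

/-- The action of a generator on the free module on irreducible words. -/
noncomputable def F (g : Gen n) : M K n →ₗ[K] M K n :=
  Finsupp.lift (M K n) K (IW n) fun p => f K g p.1

lemma F_single (g : Gen n) (p : IW n) : F K g (Finsupp.single p 1) = f K g p.1 := by
  simp [F]

end

end Stmt0

namespace Stmt0

variable {n : ℕ}

section
variable (K : Type) [Field K]

lemma fsub_a (j : Fin (n + 1)) (l : List (Gen n)) : fsub K (Gen.a j) l = 0 :=
  fsub_zero K (by rintro _ _ _ ⟨⟩)

lemma fsub_b (j : Fin (n + 1)) (l : List (Gen n)) : fsub K (Gen.b j) l = 0 :=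
  fsub_zero K (by rintro _ _ _ ⟨⟩)

lemma fsub_c0 (l : List (Gen n)) : fsub K (Gen.c (0 : Fin (n + 1))) l = 0 :=
  fsub_zero K (by
    rintro j' rest hj' heq heq2
    injection heq with h1
    exact hj' h1.symm)

lemma fsub_c_nomatch {j : Fin (n + 1)} {l : List (Gen n)}
    (h : ∀ rest, l ≠ Gen.a j :: Gen.b j :: rest) : fsub K (Gen.c j) l = 0 :=
  fsub_zero K (by
    rintro j' rest hj' heq heq2
    injection heq with h1
    subst h1
    exact h rest heq2)

lemma F_neg_single (g : Gen n) {x : List (Gen n)} (hx : ¬ Red x) :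
    F K g (-Finsupp.single ⟨x, hx⟩ 1) = -f K g x := by
  rw [map_neg, F_single]

end

/-- helper irreducibility: `c_j a_j l` is irreducible when `a_j l` is and `l` does not
start with `b_j` (for `j ≠ 0`). -/
lemma irr_c_a {j : Fin (n + 1)} {l : List (Gen n)} (hj : j ≠ 0)
    (h : ¬ Red (Gen.a j :: l)) (hB : ∀ t, l ≠ Gen.b j :: t) :
    ¬ Red (Gen.c j :: Gen.a j :: l) := by
  apply irr_cons h
  · intro y t heq
    injection heq with h1 h2
    subst h1
    simp only [P2]
    rintro ⟨h0, -⟩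
    exact hj h0
  · intro y z t heq
    injection heq with h1 h2
    subst h1
    rcases z with m | m | m <;> simp only [P3] <;> try exact not_false
    rintro ⟨-, rfl, -⟩
    exact hB t h2

/-- helper irreducibility: `b_j c_j l` is irreducible when `c_j l` is and `l` does not
start with `a_j`. -/
lemma irr_b_c {j : Fin (n + 1)} {l : List (Gen n)}
    (h : ¬ Red (Gen.c j :: l)) (hA : ∀ t, l ≠ Gen.a j :: t) :
    ¬ Red (Gen.b j :: Gen.c j :: l) := by
  apply irr_cons h
  · intro y t heq
    injection heq with h1 h2
    subst h1
    simp [P2]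
  · intro y z t heq
    injection heq with h1 h2
    subst h1
    rcases z with m | m | m <;> simp only [P3] <;> try exact not_false
    rintro ⟨-, rfl, -⟩
    exact hA t h2

section
variable (K : Type) [Field K]

lemma phi_ba {j k : Fin (n + 1)} (hjk : (j : ℕ) = (k : ℕ) + 1) (p : IW n) :
    F K (Gen.b j) (F K (Gen.a k) (Finsupp.single p 1)) = 0 := by
  obtain ⟨l, hl⟩ := p
  rw [F_single]
  by_cases h : Red (Gen.a k :: l)
  · rw [f_red K h, fsub_a, map_zero]
  · rw [f_irr K h, F_single]
    have hr : Red (Gen.b j :: Gen.a k :: l) := red2 _ (by simpa [P2] using hjk)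
    rw [f_red K hr, fsub_b]

lemma phi_c0a (p : IW n) :
    F K (Gen.c (0 : Fin (n + 1))) (F K (Gen.a (0 : Fin (n + 1))) (Finsupp.single p 1)) = 0 := by
  obtain ⟨l, hl⟩ := p
  rw [F_single]
  by_cases h : Red (Gen.a (0 : Fin (n + 1)) :: l)
  · rw [f_red K h, fsub_a, map_zero]
  · rw [f_irr K h, F_single]
    have hr : Red (Gen.c (0 : Fin (n+1)) :: Gen.a (0 : Fin (n+1)) :: l) :=
      red2 _ (by simp [P2])
    rw [f_red K hr, fsub_c0]

lemma phi_cc {j k : Fin (n + 1)} (hjk : (k : ℕ) = (j : ℕ) + 1) (p : IW n) :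
    F K (Gen.c j) (F K (Gen.c k) (Finsupp.single p 1)) = 0 := by
  obtain ⟨l, hl⟩ := p
  have hk0 : k ≠ 0 := fun h => by rw [h, Fin.val_zero] at hjk; omega
  rw [F_single]
  by_cases h : Red (Gen.c k :: l)
  · rw [f_red K h]
    by_cases hcab : ∃ rest, l = Gen.a k :: Gen.b k :: rest
    · obtain ⟨rest, rfl⟩ := hcab
      rw [fsub_cab K hk0]
      split_ifs with h2
      · rw [map_zero]
      · rw [F_neg_single]
        by_cases hj0 : j = 0
        · subst hj0
          rw [Fin.val_zero] at hjk
          have hdn : dn k = (0 : Fin (n+1)) := Fin.ext (by simp [dn]; omega)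
          rw [hdn]
          have hr2 : Red (Gen.c (0:Fin (n+1)) :: Gen.a (0:Fin (n+1)) :: Gen.b (0:Fin (n+1))
              :: Gen.c (0:Fin (n+1)) :: rest) := red2 _ (by simp [P2])
          rw [f_red K hr2, fsub_c0, neg_zero]
        · have hdn : dn k = j := Fin.ext (by simp [dn]; omega)
          rw [hdn]
          have hjv : (j : ℕ) ≠ 0 := fun h' => hj0 (Fin.ext (by rw [h', Fin.val_zero]))
          have hr2 : Red (Gen.c j :: Gen.a j :: Gen.b j :: Gen.c j :: rest) :=
            red3 _ (by simpa [P3] using hj0)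
          rw [f_red K hr2, fsub_cab K hj0]
          have hred : Red (Gen.a (dn j) :: Gen.b (dn j) :: Gen.c (dn j) :: Gen.c j :: rest) :=
            red_tail _ (red_tail _ (red2 _ (by simp [P2, dn]; omega)))
          rw [dif_neg (not_not_intro hred), neg_zero]
    · rw [fsub_c_nomatch K (fun rest heq => hcab ⟨rest, heq⟩), map_zero]
  · rw [f_irr K h, F_single]
    have hr : Red (Gen.c j :: Gen.c k :: l) := red2 _ (by simpa [P2] using hjk)
    rw [f_red K hr,
      fsub_c_nomatch K (by rintro rest ⟨⟩)]

lemma phi_bca {j : Fin (n + 1)} (hj : j ≠ 0) (p : IW n) :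
    F K (Gen.b j) (F K (Gen.c j) (F K (Gen.a j) (Finsupp.single p 1))) = 0 := by
  obtain ⟨l, hl⟩ := p
  have hjv : (j : ℕ) ≠ 0 := fun h' => hj (Fin.ext (by rw [h', Fin.val_zero]))
  rw [F_single]
  by_cases h : Red (Gen.a j :: l)
  · rw [f_red K h, fsub_a, map_zero, map_zero]
  · rw [f_irr K h, F_single]
    by_cases hB : ∃ t, l = Gen.b j :: t
    · obtain ⟨t, rfl⟩ := hB
      have hr : Red (Gen.c j :: Gen.a j :: Gen.b j :: t) := red3 _ (by simpa [P3] using hj)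
      rw [f_red K hr, fsub_cab K hj]
      split_ifs with h2
      · rw [map_zero]
      · rw [F_neg_single]
        have hr2 : Red (Gen.b j :: Gen.a (dn j) :: Gen.b (dn j) :: Gen.c (dn j) :: t) :=
          red2 _ (by simp [P2, dn]; omega)
        rw [f_red K hr2, fsub_b, neg_zero]
    · have hirr : ¬ Red (Gen.c j :: Gen.a j :: l) :=
        irr_c_a hj h (fun t heq => hB ⟨t, heq⟩)
      rw [f_irr K hirr, F_single]
      have hr : Red (Gen.b j :: Gen.c j :: Gen.a j :: l) := red3 _ (by simpa [P3] using hj)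
      rw [f_red K hr, fsub_b]

lemma phi_abc {j : Fin (n + 1)} (hlast : (j : ℕ) = n) (p : IW n) :
    F K (Gen.a j) (F K (Gen.b j) (F K (Gen.c j) (Finsupp.single p 1))) = 0 := by
  obtain ⟨l, hl⟩ := p
  rw [F_single]
  by_cases h : Red (Gen.c j :: l)
  · rw [f_red K h]
    by_cases hcab : ∃ rest, l = Gen.a j :: Gen.b j :: rest
    · obtain ⟨rest, rfl⟩ := hcab
      by_cases hj0 : j = 0
      · subst hj0; rw [fsub_c0, map_zero, map_zero]
      · rw [fsub_cab K hj0]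
        split_ifs with h2
        · rw [map_zero, map_zero]
        · rw [F_neg_single]
          have hjv : (j : ℕ) ≠ 0 := fun h' => hj0 (Fin.ext (by rw [h', Fin.val_zero]))
          have hr2 : Red (Gen.b j :: Gen.a (dn j) :: Gen.b (dn j) :: Gen.c (dn j) :: rest) :=
            red2 _ (by simp [P2, dn]; omega)
          rw [f_red K hr2, fsub_b, neg_zero, map_zero]
    · rw [fsub_c_nomatch K (fun rest heq => hcab ⟨rest, heq⟩), map_zero, map_zero]
  · rw [f_irr K h, F_single]
    by_cases hA : ∃ t, l = Gen.a j :: t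
    · obtain ⟨t, rfl⟩ := hA
      by_cases hj0 : j = 0
      · subst hj0
        exact absurd (red2 (x := Gen.c (0:Fin (n+1))) t (by simp [P2])) h
      · have hr : Red (Gen.b j :: Gen.c j :: Gen.a j :: t) := red3 _ (by simpa [P3] using hj0)
        rw [f_red K hr, fsub_b, map_zero]
    · have hirr : ¬ Red (Gen.b j :: Gen.c j :: l) := irr_b_c h (fun t heq => hA ⟨t, heq⟩)
      rw [f_irr K hirr, F_single]
      have hr : Red (Gen.a j :: Gen.b j :: Gen.c j :: l) :=
        red3 _ (show P3 _ _ _ from ⟨rfl, rfl, Fin.ext (by simp [hlast])⟩)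
      rw [f_red K hr, fsub_a]

lemma phi_sum {j k : Fin (n + 1)} (hjk : (k : ℕ) = (j : ℕ) + 1) (p : IW n) :
    F K (Gen.a j) (F K (Gen.b j) (F K (Gen.c j) (Finsupp.single p 1))) +
      F K (Gen.c k) (F K (Gen.a k) (F K (Gen.b k) (Finsupp.single p 1))) = 0 := by
  obtain ⟨l, hl⟩ := p
  have hk0 : k ≠ 0 := fun h => by rw [h, Fin.val_zero] at hjk; omega
  have hjn : (j : ℕ) < n := by have := k.isLt; omega
  rw [F_single (K := K) (Gen.c j), F_single (K := K) (Gen.b k)]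
  by_cases hA : ∃ t, l = Gen.a j :: t
  · obtain ⟨t, rfl⟩ := hA
    -- T2 = 0
    have h2 : Red (Gen.b k :: Gen.a j :: t) := red2 _ (by simp [P2]; omega)
    rw [f_red K h2, fsub_b, map_zero, map_zero]
    -- T1 = 0
    by_cases hj0 : j = 0
    · subst hj0
      have hr : Red (Gen.c (0:Fin (n+1)) :: Gen.a (0:Fin (n+1)) :: t) := red2 _ (by simp [P2])
      rw [f_red K hr, fsub_c0, map_zero, map_zero, add_zero]
    · by_cases hB : ∃ t', t = Gen.b j :: t'
      · obtain ⟨t', rfl⟩ := hB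
        have hr : Red (Gen.c j :: Gen.a j :: Gen.b j :: t') := red3 _ (by simpa [P3] using hj0)
        rw [f_red K hr, fsub_cab K hj0]
        split_ifs with h2'
        · rw [map_zero, map_zero, add_zero]
        · rw [F_neg_single]
          have hjv : (j : ℕ) ≠ 0 := fun h' => hj0 (Fin.ext (by rw [h', Fin.val_zero]))
          have hr2 : Red (Gen.b j :: Gen.a (dn j) :: Gen.b (dn j) :: Gen.c (dn j) :: t') :=
            red2 _ (by simp [P2, dn]; omega)
          rw [f_red K hr2, fsub_b, neg_zero, map_zero, add_zero]
      · have hirr : ¬ Red (Gen.c j :: Gen.a j :: t) :=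
          irr_c_a hj0 hl (fun t' heq => hB ⟨t', heq⟩)
        rw [f_irr K hirr, F_single]
        have hr : Red (Gen.b j :: Gen.c j :: Gen.a j :: t) := red3 _ (by simpa [P3] using hj0)
        rw [f_red K hr, fsub_b, map_zero, add_zero]
  · by_cases hC : ∃ t, l = Gen.c k :: t
    · obtain ⟨t, rfl⟩ := hC
      -- T1 = 0
      have h1 : Red (Gen.c j :: Gen.c k :: t) := red2 _ (by simpa [P2] using hjk)
      rw [f_red K h1, fsub_c_nomatch K (by rintro rest ⟨⟩), map_zero, map_zero, zero_add]
      -- T2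
      by_cases hA2 : ∃ t', t = Gen.a k :: t'
      · obtain ⟨t', rfl⟩ := hA2
        have hr : Red (Gen.b k :: Gen.c k :: Gen.a k :: t') := red3 _ (by simpa [P3] using hk0)
        rw [f_red K hr, fsub_b, map_zero, map_zero]
      · have hirr : ¬ Red (Gen.b k :: Gen.c k :: t) := irr_b_c hl (fun t' heq => hA2 ⟨t', heq⟩)
        rw [f_irr K hirr, F_single]
        by_cases hkl : (k : ℕ) = n
        · have hr : Red (Gen.a k :: Gen.b k :: Gen.c k :: t) :=
            red3 _ (show P3 _ _ _ from ⟨rfl, rfl, Fin.ext (by simp [hkl])⟩)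
          rw [f_red K hr, fsub_a, map_zero]
        · have hirr2 : ¬ Red (Gen.a k :: Gen.b k :: Gen.c k :: t) := by
            apply irr_cons hirr
            · intro y t' heq
              injection heq with hy _
              subst hy
              simp [P2]
            · intro y z t' heq
              injection heq with hy h2'
              injection h2' with hz _
              subst hy; subst hz
              simp only [P3]
              rintro ⟨-, -, hL⟩
              exact hkl (by rw [hL]; simp)
          rw [f_irr K hirr2, F_single]
          have hr : Red (Gen.c k :: Gen.a k :: Gen.b k :: Gen.c k :: t) :=
            red3 _ (by simpa [P3] using hk0)
          rw [f_red K hr, fsub_cab K hk0]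
          have hred : Red (Gen.a (dn k) :: Gen.b (dn k) :: Gen.c (dn k) :: Gen.c k :: t) :=
            red_tail _ (red_tail _ (red2 _ (by simp [P2, dn]; omega)))
          rw [dif_neg (not_not_intro hred)]
    · -- generic case: both terms are (up to sign) the same basis vector
      have hdnk : dn k = j := Fin.ext (by simp [dn, hjk])
      have hA' : ∀ t, l ≠ Gen.a j :: t := fun t heq => hA ⟨t, heq⟩
      have hC' : ∀ t, l ≠ Gen.c k :: t := fun t heq => hC ⟨t, heq⟩
      have h_c : ¬ Red (Gen.c j :: l) := by
        apply irr_cons hl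
        · intro y t heq
          rcases y with m | m | m <;> simp only [P2] <;> try exact not_false
          · rintro ⟨rfl, rfl⟩
            exact hA' t heq
          · intro hm
            have : m = k := Fin.ext (by omega)
            subst this
            exact hC' t heq
        · intro y z t heq
          rcases y with m | m | m <;> rcases z with m' | m' | m' <;> simp only [P3] <;>
            try exact not_false
          rintro ⟨rfl, -, -⟩
          exact hA' _ heq
      have h_bc : ¬ Red (Gen.b j :: Gen.c j :: l) := by
        apply irr_cons h_c
        · intro y t heq
          injection heq with hy _
          subst hy
          simp [P2]
        · intro y z t heq
          injection heq with hy h2'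
          subst hy
          rcases z with m | m | m <;> simp only [P3] <;> try exact not_false
          rintro ⟨-, rfl, -⟩
          exact hA' t h2'
      have h_abc : ¬ Red (Gen.a j :: Gen.b j :: Gen.c j :: l) := by
        apply irr_cons h_bc
        · intro y t heq
          injection heq with hy _
          subst hy
          simp [P2]
        · intro y z t heq
          injection heq with hy h2'
          injection h2' with hz _
          subst hy; subst hz
          simp only [P3]
          rintro ⟨-, -, hL⟩
          have : (j : ℕ) = n := by rw [hL]; simp
          omega
      have h_b : ¬ Red (Gen.b k :: l) := by
        apply irr_cons hl
        · intro y t heq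
          rcases y with m | m | m <;> simp only [P2] <;> try exact not_false
          intro hm
          have : m = j := Fin.ext (by omega)
          subst this
          exact hA' t heq
        · intro y z t heq
          rcases y with m | m | m <;> rcases z with m' | m' | m' <;> simp only [P3] <;>
            try exact not_false
          rintro ⟨rfl, -, -⟩
          exact hC' _ heq
      have h_ab : ¬ Red (Gen.a k :: Gen.b k :: l) := by
        apply irr_cons h_b
        · intro y t heq
          injection heq with hy _
          subst hy
          simp [P2]
        · intro y z t heq
          injection heq with hy h2'
          subst hy
          rcases z with m | m | m <;> simp only [P3] <;> try exact not_false
          rintro ⟨-, rfl, -⟩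
          exact hC' t h2'
      rw [f_irr K h_c, F_single, f_irr K h_bc, F_single, f_irr K h_abc,
        f_irr K h_b, F_single, f_irr K h_ab, F_single]
      have hr : Red (Gen.c k :: Gen.a k :: Gen.b k :: l) := red3 _ (by simpa [P3] using hk0)
      have habc' : ¬ Red (Gen.a (dn k) :: Gen.b (dn k) :: Gen.c (dn k) :: l) := by
        rw [hdnk]; exact h_abc
      rw [f_red K hr, fsub_cab K hk0, dif_pos habc']
      simp only [hdnk]
      exact add_neg_cancel _

end

end Stmt0

namespace Stmt0

variable {n : ℕ}

section
variable (K : Type) [Field K]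

lemma ga_int (m : ℤ) (h0 : 0 ≤ m) (h1 : m ≤ (n : ℤ)) :
    ga K n m = FreeAlgebra.ι K (Gen.a (⟨m.toNat, by omega⟩ : Fin (n + 1))) := by
  rw [ga, dif_pos ⟨h0, h1⟩]

lemma gb_int (m : ℤ) (h0 : 0 ≤ m) (h1 : m ≤ (n : ℤ)) :
    gb K n m = FreeAlgebra.ι K (Gen.b (⟨m.toNat, by omega⟩ : Fin (n + 1))) := by
  rw [gb, dif_pos ⟨h0, h1⟩]

lemma gc_int (m : ℤ) (h0 : 0 ≤ m) (h1 : m ≤ (n : ℤ)) :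
    gc K n m = FreeAlgebra.ι K (Gen.c (⟨m.toNat, by omega⟩ : Fin (n + 1))) := by
  rw [gc, dif_pos ⟨h0, h1⟩]

lemma πB_zero {r : FA K n} (hr : r ∈ rels K n) : πB K n r = 0 := by
  have h := RingQuot.mkAlgHom_rel K (s := BRel K n) (x := r) (y := 0) ⟨hr, rfl⟩
  rw [πB, h, map_zero]

lemma word_nil : word K n [] = 1 := rfl

lemma word_cons (g : Gen n) (l : List (Gen n)) :
    word K n (g :: l) = FreeAlgebra.ι K g * word K n l := by
  simp [word]

lemma word_mul (l m : List (Gen n)) : word K n l * word K n m = word K n (l ++ m) := by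
  simp [word, List.prod_append]

lemma word1_split (x : Gen n) (t : List (Gen n)) :
    πB K n (word K n (x :: t)) = πB K n (FreeAlgebra.ι K x) * πB K n (word K n t) := by
  rw [word_cons, map_mul]

lemma kill2 (x y : Gen n) (l : List (Gen n))
    (h : πB K n (FreeAlgebra.ι K x * FreeAlgebra.ι K y) = 0) :
    πB K n (word K n (x :: y :: l)) = 0 := by
  rw [word_cons, word_cons, ← mul_assoc, map_mul, h, zero_mul]

lemma kill3 (x y z : Gen n) (l : List (Gen n))
    (h : πB K n (FreeAlgebra.ι K x * FreeAlgebra.ι K y * FreeAlgebra.ι K z) = 0) :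
    πB K n (word K n (x :: y :: z :: l)) = 0 := by
  rw [word_cons, word_cons, word_cons, ← mul_assoc, ← mul_assoc, map_mul, h, zero_mul]

lemma word3_split (x y z : Gen n) (t : List (Gen n)) :
    πB K n (word K n (x :: y :: z :: t)) =
      πB K n (FreeAlgebra.ι K x * FreeAlgebra.ι K y * FreeAlgebra.ι K z) *
        πB K n (word K n t) := by
  rw [word_cons, word_cons, word_cons, ← mul_assoc, ← mul_assoc, map_mul]

lemma relA : πB K n (FreeAlgebra.ι K (Gen.a (⟨n, by omega⟩ : Fin (n + 1))) *
    FreeAlgebra.ι K (Gen.b (⟨n, by omega⟩ : Fin (n + 1))) *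
    FreeAlgebra.ι K (Gen.c (⟨n, by omega⟩ : Fin (n + 1)))) = 0 := by
  refine πB_zero K (Or.inl ?_)
  rw [ga_int K n (by positivity) le_rfl, gb_int K n (by positivity) le_rfl,
    gc_int K n (by positivity) le_rfl]
  have e : (⟨((n : ℕ) : ℤ).toNat, by omega⟩ : Fin (n + 1)) = ⟨n, by omega⟩ :=
    Fin.ext (by show ((n : ℕ) : ℤ).toNat = n; omega)
  rw [e]

lemma relC0A : πB K n (FreeAlgebra.ι K (Gen.c (⟨0, by omega⟩ : Fin (n + 1))) *
    FreeAlgebra.ι K (Gen.a (⟨0, by omega⟩ : Fin (n + 1)))) = 0 := by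
  refine πB_zero K (Or.inr (Or.inl ?_))
  rw [gc_int K 0 le_rfl (by positivity), ga_int K 0 le_rfl (by positivity)]
  have e : (⟨(0 : ℤ).toNat, by omega⟩ : Fin (n + 1)) = ⟨0, by omega⟩ :=
    Fin.ext (by show (0 : ℤ).toNat = 0; omega)
  rw [e]

lemma relCC (jv : ℕ) (h : jv + 1 ≤ n) :
    πB K n (FreeAlgebra.ι K (Gen.c (⟨jv, by omega⟩ : Fin (n + 1))) *
      FreeAlgebra.ι K (Gen.c (⟨jv + 1, by omega⟩ : Fin (n + 1)))) = 0 := by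
  refine πB_zero K (Or.inr (Or.inr ⟨jv, by omega, Or.inr (Or.inr (Or.inl ?_))⟩))
  rw [gc_int K jv (by positivity) (by exact_mod_cast by omega),
    gc_int K ((jv : ℤ) + 1) (by positivity) (by exact_mod_cast by omega)]
  have e1 : (⟨((jv : ℕ) : ℤ).toNat, by omega⟩ : Fin (n + 1)) = ⟨jv, by omega⟩ :=
    Fin.ext (by show ((jv : ℕ) : ℤ).toNat = jv; omega)
  have e2 : (⟨((jv : ℤ) + 1).toNat, by omega⟩ : Fin (n + 1)) = ⟨jv + 1, by omega⟩ :=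
    Fin.ext (by show ((jv : ℤ) + 1).toNat = jv + 1; omega)
  rw [e1, e2]

lemma relBA (kv : ℕ) (h : kv + 1 ≤ n) :
    πB K n (FreeAlgebra.ι K (Gen.b (⟨kv + 1, by omega⟩ : Fin (n + 1))) *
      FreeAlgebra.ι K (Gen.a (⟨kv, by omega⟩ : Fin (n + 1)))) = 0 := by
  refine πB_zero K (Or.inr (Or.inr ⟨kv, by omega, Or.inr (Or.inr (Or.inr ?_))⟩))
  rw [gb_int K ((kv : ℤ) + 1) (by positivity) (by exact_mod_cast by omega),
    ga_int K kv (by positivity) (by exact_mod_cast by omega)]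
  have e1 : (⟨((kv : ℤ) + 1).toNat, by omega⟩ : Fin (n + 1)) = ⟨kv + 1, by omega⟩ :=
    Fin.ext (by show ((kv : ℤ) + 1).toNat = kv + 1; omega)
  have e2 : (⟨((kv : ℕ) : ℤ).toNat, by omega⟩ : Fin (n + 1)) = ⟨kv, by omega⟩ :=
    Fin.ext (by show ((kv : ℕ) : ℤ).toNat = kv; omega)
  rw [e1, e2]

lemma relBCA (iv : ℕ) (h : iv < n) :
    πB K n (FreeAlgebra.ι K (Gen.b (⟨iv + 1, by omega⟩ : Fin (n + 1))) *
      FreeAlgebra.ι K (Gen.c (⟨iv + 1, by omega⟩ : Fin (n + 1))) *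
      FreeAlgebra.ι K (Gen.a (⟨iv + 1, by omega⟩ : Fin (n + 1)))) = 0 := by
  refine πB_zero K (Or.inr (Or.inr ⟨iv, h, Or.inr (Or.inl ?_)⟩))
  rw [gb_int K ((iv : ℤ) + 1) (by positivity) (by exact_mod_cast by omega),
    gc_int K ((iv : ℤ) + 1) (by positivity) (by exact_mod_cast by omega),
    ga_int K ((iv : ℤ) + 1) (by positivity) (by exact_mod_cast by omega)]
  have e1 : (⟨((iv : ℤ) + 1).toNat, by omega⟩ : Fin (n + 1)) = ⟨iv + 1, by omega⟩ :=
    Fin.ext (by show ((iv : ℤ) + 1).toNat = iv + 1; omega)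
  rw [e1]

lemma relSum (iv : ℕ) (h : iv < n) :
    πB K n (FreeAlgebra.ι K (Gen.c (⟨iv + 1, by omega⟩ : Fin (n + 1))) *
      FreeAlgebra.ι K (Gen.a (⟨iv + 1, by omega⟩ : Fin (n + 1))) *
      FreeAlgebra.ι K (Gen.b (⟨iv + 1, by omega⟩ : Fin (n + 1)))) =
    -πB K n (FreeAlgebra.ι K (Gen.a (⟨iv, by omega⟩ : Fin (n + 1))) *
      FreeAlgebra.ι K (Gen.b (⟨iv, by omega⟩ : Fin (n + 1))) *
      FreeAlgebra.ι K (Gen.c (⟨iv, by omega⟩ : Fin (n + 1)))) := by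
  have h0 := πB_zero K (Or.inr (Or.inr ⟨iv, h,
    Or.inl (rfl : ga K n iv * gb K n iv * gc K n iv +
      gc K n ((iv : ℤ) + 1) * ga K n ((iv : ℤ) + 1) * gb K n ((iv : ℤ) + 1) = _)⟩))
  rw [map_add, ga_int K iv (by positivity) (by exact_mod_cast by omega),
    gb_int K iv (by positivity) (by exact_mod_cast by omega),
    gc_int K iv (by positivity) (by exact_mod_cast by omega),
    gc_int K ((iv : ℤ) + 1) (by positivity) (by exact_mod_cast by omega),
    ga_int K ((iv : ℤ) + 1) (by positivity) (by exact_mod_cast by omega),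
    gb_int K ((iv : ℤ) + 1) (by positivity) (by exact_mod_cast by omega)] at h0
  have e1 : (⟨((iv : ℤ) + 1).toNat, by omega⟩ : Fin (n + 1)) = ⟨iv + 1, by omega⟩ :=
    Fin.ext (by show ((iv : ℤ) + 1).toNat = iv + 1; omega)
  have e2 : (⟨((iv : ℕ) : ℤ).toNat, by omega⟩ : Fin (n + 1)) = ⟨iv, by omega⟩ :=
    Fin.ext (by show ((iv : ℕ) : ℤ).toNat = iv; omega)
  rw [e1, e2] at h0
  exact eq_neg_of_add_eq_zero_left (by rwa [add_comm] at h0)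

/-- If the result `a_p b_p c_p t` of a rewriting step is reducible (with `t` irreducible),
its image in `B` vanishes. -/
lemma kill_red_abc (jv : ℕ) (hlt : jv < n) (t : List (Gen n)) (ht : ¬ Red t)
    (h2 : Red (Gen.a (⟨jv, by omega⟩ : Fin (n + 1)) :: Gen.b ⟨jv, by omega⟩ ::
      Gen.c ⟨jv, by omega⟩ :: t)) :
    πB K n (word K n (Gen.a (⟨jv, by omega⟩ : Fin (n + 1)) :: Gen.b ⟨jv, by omega⟩ ::
      Gen.c ⟨jv, by omega⟩ :: t)) = 0 := by
  rcases red_cons.mp h2 with h' | ⟨y, t', heq, hp2⟩ | ⟨y, z, t', heq, hp3⟩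
  · -- Red (b :: c :: t)
    rcases red_cons.mp h' with h'' | ⟨y, t', heq, hp2⟩ | ⟨y, z, t', heq, hp3⟩
    · -- Red (c :: t)
      rcases red_cons.mp h'' with h3 | ⟨y, t', heq, hp2⟩ | ⟨y, z, t', heq, hp3⟩
      · exact absurd h3 ht
      · -- P2 (c p) y, t = y :: t'
        subst heq
        rcases y with m | m | m
        · -- a m : p = 0 ∧ m = 0
          obtain ⟨hp0, rfl⟩ := (hp2 : _ ∧ _)
          have hjv0 : jv = 0 := by
            have := congrArg Fin.val hp0
            rwa [Fin.val_zero] at this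
          subst hjv0
          have h00 : (0 : Fin (n + 1)) = ⟨0, by omega⟩ := Fin.ext (by simp)
          rw [h00, word1_split, word1_split, kill2 K _ _ _ (relC0A K), mul_zero, mul_zero]
        · exact False.elim hp2
        · -- c m : (m : ℕ) = jv + 1
          obtain ⟨mv, hm⟩ := m
          have hmv : mv = jv + 1 := hp2
          subst hmv
          rw [word1_split, word1_split, kill2 K _ _ _ (relCC K jv (by omega)),
            mul_zero, mul_zero]
      · -- P3 (c p) y z, t = y :: z :: t'
        subst heq
        rcases y with m | m | m <;> rcases z with m' | m' | m' <;> try exact False.elim hp3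
        obtain ⟨hm, hm', hp0⟩ := (hp3 : _ ∧ _ ∧ _)
        obtain rfl := hm.symm
        have hjv0 : jv ≠ 0 := by
          intro h0
          exact hp0 (Fin.ext (by rw [Fin.val_zero]; exact h0))
        have hmk : (⟨jv, by omega⟩ : Fin (n + 1)) = ⟨(jv - 1) + 1, by omega⟩ :=
          Fin.ext (by show jv = jv - 1 + 1; omega)
        rw [hmk, word1_split, kill3 K _ _ _ _ (relBCA K (jv - 1) (by omega)), mul_zero]
    · -- P2 (b p) (c p) : impossible
      injection heq with hy ht2
      subst hy
      exact False.elim hp2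
    · -- P3 (b p) (c p) z, t = z :: t'
      injection heq with hy ht2
      subst hy
      rcases z with m | m | m <;> try exact False.elim hp3
      obtain ⟨-, hm, hp0⟩ := (hp3 : _ ∧ _ ∧ _)
      obtain rfl := hm.symm
      subst ht2
      have hjv0 : jv ≠ 0 := by
        intro h0
        exact hp0 (Fin.ext (by rw [Fin.val_zero]; exact h0))
      have hmk : (⟨jv, by omega⟩ : Fin (n + 1)) = ⟨(jv - 1) + 1, by omega⟩ :=
        Fin.ext (by show jv = jv - 1 + 1; omega)
      rw [hmk, word1_split, kill3 K _ _ _ _ (relBCA K (jv - 1) (by omega)), mul_zero]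
  · -- P2 (a p) (b p) : impossible
    injection heq with hy ht2
    subst hy
    exact False.elim hp2
  · -- P3 (a p) (b p) (c p) : forces jv = n
    injection heq with hy h2'
    injection h2' with hz h3'
    subst hy
    subst hz
    have hL : (⟨jv, by omega⟩ : Fin (n + 1)) = Fin.last n := (hp3 : _ ∧ _ ∧ _).2.2
    have : jv = n := by
      have := congrArg Fin.val hL
      simpa using this
    omega

end

end Stmt0

namespace Stmt0

variable {n : ℕ}

section
variable (K : Type) [Field K]

lemma end_eq_zero {E : Module.End K (M K n)}
    (h : ∀ p : IW n, E (Finsupp.single p 1) = 0) : E = 0 := by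
  apply Finsupp.lhom_ext
  intro p b
  have hb : (Finsupp.single p b : M K n) = b • Finsupp.single p 1 := by
    rw [Finsupp.smul_single, smul_eq_mul, mul_one]
  rw [hb, map_smul, h p, smul_zero, LinearMap.zero_apply]

/-- The action of `T(V)` on the free module on irreducible words. -/
noncomputable def φ : FA K n →ₐ[K] Module.End K (M K n) :=
  FreeAlgebra.lift K fun g => F K g

lemma φ_ι (g : Gen n) : φ K (FreeAlgebra.ι K g) = F K g := by
  simp [φ]

lemma φ_rels {r : FA K n} (hr : r ∈ rels K n) : φ K r = 0 := by
  rcases hr with h | h | ⟨i, hi, h | h | h | h⟩ <;> subst h <;> apply end_eq_zero <;> intro p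
  · -- a_n b_n c_n
    rw [ga_int K n (by positivity) le_rfl, gb_int K n (by positivity) le_rfl,
      gc_int K n (by positivity) le_rfl, map_mul, map_mul, Module.End.mul_apply,
      Module.End.mul_apply, φ_ι, φ_ι, φ_ι]
    exact phi_abc K (show ((n : ℕ) : ℤ).toNat = n by omega) p
  · -- c_0 a_0
    rw [gc_int K 0 le_rfl (by positivity), ga_int K 0 le_rfl (by positivity),
      map_mul, Module.End.mul_apply, φ_ι, φ_ι]
    have e : (⟨(0 : ℤ).toNat, by omega⟩ : Fin (n + 1)) = 0 :=
      Fin.ext (by rw [Fin.val_zero]; rfl)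
    rw [e]
    exact phi_c0a K p
  · -- sum relation
    rw [map_add, ga_int K i (by positivity) (by exact_mod_cast hi.le),
      gb_int K i (by positivity) (by exact_mod_cast hi.le),
      gc_int K i (by positivity) (by exact_mod_cast hi.le),
      gc_int K ((i : ℤ) + 1) (by positivity) (by exact_mod_cast by omega),
      ga_int K ((i : ℤ) + 1) (by positivity) (by exact_mod_cast by omega),
      gb_int K ((i : ℤ) + 1) (by positivity) (by exact_mod_cast by omega),
      map_mul, map_mul, map_mul, map_mul, LinearMap.add_apply, Module.End.mul_apply,
      Module.End.mul_apply, Module.End.mul_apply, Module.End.mul_apply, φ_ι, φ_ι, φ_ι, φ_ι, φ_ι, φ_ι]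
    exact phi_sum K (show ((i : ℤ) + 1).toNat = ((i : ℕ) : ℤ).toNat + 1 by omega) p
  · -- b c a
    rw [gb_int K ((i : ℤ) + 1) (by positivity) (by exact_mod_cast by omega),
      gc_int K ((i : ℤ) + 1) (by positivity) (by exact_mod_cast by omega),
      ga_int K ((i : ℤ) + 1) (by positivity) (by exact_mod_cast by omega),
      map_mul, map_mul, Module.End.mul_apply, Module.End.mul_apply, φ_ι, φ_ι, φ_ι]
    refine phi_bca K ?_ p
    intro h0
    have h1 : ((i : ℤ) + 1).toNat = (0 : Fin (n + 1)).val := congrArg Fin.val h0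
    rw [Fin.val_zero] at h1
    omega
  · -- c c
    rw [gc_int K i (by positivity) (by exact_mod_cast hi.le),
      gc_int K ((i : ℤ) + 1) (by positivity) (by exact_mod_cast by omega),
      map_mul, Module.End.mul_apply, φ_ι, φ_ι]
    exact phi_cc K (show ((i : ℤ) + 1).toNat = ((i : ℕ) : ℤ).toNat + 1 by omega) p
  · -- b a
    rw [gb_int K ((i : ℤ) + 1) (by positivity) (by exact_mod_cast by omega),
      ga_int K i (by positivity) (by exact_mod_cast hi.le),
      map_mul, Module.End.mul_apply, φ_ι, φ_ι]
    exact phi_ba K (show ((i : ℤ) + 1).toNat = ((i : ℕ) : ℤ).toNat + 1 by omega) p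

/-- The induced action of `B` on the free module on irreducible words. -/
noncomputable def Φ : B K n →ₐ[K] Module.End K (M K n) :=
  RingQuot.liftAlgHom K ⟨φ K, by
    rintro x y ⟨hx, rfl⟩
    rw [map_zero, φ_rels K hx]⟩

lemma Φ_πB (x : FA K n) : Φ K (πB K n x) = φ K x := by
  rw [πB, Φ, RingQuot.liftAlgHom_mkAlgHom_apply]

/-- The basis vector at the empty word. -/
noncomputable def e0 : M K n := Finsupp.single ⟨([] : List (Gen n)), red_nil⟩ 1

/-- Evaluation of the `B`-action at the empty word. -/
noncomputable def ψ : B K n →ₗ[K] M K n where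
  toFun b := Φ K b (e0 K)
  map_add' x y := by
    show Φ K (x + y) (e0 K) = Φ K x (e0 K) + Φ K y (e0 K)
    rw [map_add, LinearMap.add_apply]
  map_smul' c x := by
    show Φ K (c • x) (e0 K) = c • Φ K x (e0 K)
    rw [map_smul, LinearMap.smul_apply]

/-- Sending irreducible words to their image in `B`. -/
noncomputable def θ : M K n →ₗ[K] B K n :=
  Finsupp.lift (B K n) K (IW n) fun p => πB K n (word K n p.1)

lemma θ_single (p : IW n) : θ K (Finsupp.single p 1) = πB K n (word K n p.1) := by
  simp [θ]

set_option maxHeartbeats 2000000 in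
/-- The key lemma: multiplying an irreducible word by a generator in `B`
is computed by the reduction `f`. -/
lemma key (g : Gen n) (l : List (Gen n)) (hl : ¬ Red l) :
    πB K n (word K n (g :: l)) = θ K (f K g l) := by
  by_cases h : Red (g :: l)
  · rw [f_red K h]
    rcases red_cons.mp h with h' | ⟨y, t, rfl, hp⟩ | ⟨y, z, t, rfl, hp⟩
    · exact absurd h' hl
    · -- length-2 prefix
      rcases g with j | j | j <;> rcases y with k | k | k <;> try exact False.elim hp
      · -- b j, a k
        rw [fsub_b, map_zero]
        obtain ⟨jv, hjlt⟩ := j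
        obtain ⟨kv, hklt⟩ := k
        have hv : jv = kv + 1 := hp
        subst hv
        exact kill2 K _ _ _ (relBA K kv (by omega))
      · -- c j, a k : j = 0, k = 0
        obtain ⟨rfl, rfl⟩ := (hp : _ ∧ _)
        rw [fsub_c0 K, map_zero]
        have h00 : (0 : Fin (n + 1)) = ⟨0, by omega⟩ := Fin.ext (by simp)
        rw [h00]
        exact kill2 K _ _ _ (relC0A K)
      · -- c j, c k
        rw [fsub_c_nomatch K (by rintro rest ⟨⟩), map_zero]
        obtain ⟨jv, hjlt⟩ := j
        obtain ⟨kv, hklt⟩ := k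
        have hv : kv = jv + 1 := hp
        subst hv
        exact kill2 K _ _ _ (relCC K jv (by omega))
    · -- length-3 prefix
      rcases g with j | j | j <;> rcases y with k | k | k <;> rcases z with m | m | m <;>
        try exact False.elim hp
      · -- a b c : all last
        obtain ⟨rfl, rfl, hL⟩ := (hp : _ ∧ _ ∧ _)
        subst hL
        rw [fsub_a, map_zero]
        have hLn : Fin.last n = (⟨n, by omega⟩ : Fin (n + 1)) := Fin.ext rfl
        rw [hLn]
        exact kill3 K _ _ _ _ (relA K)
      · -- b c a
        obtain ⟨rfl, rfl, hj⟩ := (hp : _ ∧ _ ∧ _)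
        rw [fsub_b, map_zero]
        obtain ⟨jv, hjlt⟩ := j
        have hjv : jv ≠ 0 := by
          intro h0
          exact hj (Fin.ext (by rw [Fin.val_zero]; exact h0))
        have hmk : (⟨jv, hjlt⟩ : Fin (n + 1)) = ⟨(jv - 1) + 1, by omega⟩ :=
          Fin.ext (by show jv = jv - 1 + 1; omega)
        rw [hmk]
        exact kill3 K _ _ _ _ (relBCA K (jv - 1) (by omega))
      · -- c a b : the rewrite rule
        obtain ⟨rfl, rfl, hj⟩ := (hp : _ ∧ _ ∧ _)
        obtain ⟨jv, hjlt⟩ := j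
        have hjv : jv ≠ 0 := by
          intro h0
          exact hj (Fin.ext (by rw [Fin.val_zero]; exact h0))
        have ht : ¬ Red t := irr_tail (irr_tail hl)
        have hmk : (⟨jv, hjlt⟩ : Fin (n + 1)) = ⟨(jv - 1) + 1, by omega⟩ :=
          Fin.ext (by show jv = jv - 1 + 1; omega)
        rw [hmk] at hj hl ⊢
        rw [fsub_cab K hj]
        have hw : πB K n (word K n (Gen.c (⟨(jv - 1) + 1, by omega⟩ : Fin (n + 1)) ::
            Gen.a ⟨(jv - 1) + 1, by omega⟩ :: Gen.b ⟨(jv - 1) + 1, by omega⟩ :: t)) =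
            -πB K n (word K n (Gen.a (⟨jv - 1, by omega⟩ : Fin (n + 1)) ::
              Gen.b ⟨jv - 1, by omega⟩ :: Gen.c ⟨jv - 1, by omega⟩ :: t)) := by
          rw [word3_split, word3_split, relSum K (jv - 1) (by omega)]
          exact neg_mul (α := B K n) _ _
        rw [hw]
        split_ifs with h2
        · -- the rewritten word is still reducible: both sides vanish
          rw [map_zero, neg_eq_zero]
          exact kill_red_abc K (jv - 1) (by omega) t ht h2
        · rw [map_neg, θ_single]
          rfl
  · rw [f_irr K h, θ_single]

end

end Stmt0

namespace Stmt0

variable {n : ℕ}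

section
variable (K : Type) [Field K]

lemma phi_word (l : List (Gen n)) (p : IW n) (h : ¬ Red (l ++ p.1)) :
    φ K (word K n l) (Finsupp.single p 1) = Finsupp.single ⟨l ++ p.1, h⟩ 1 := by
  induction l with
  | nil =>
    rw [word_nil, map_one, Module.End.one_apply]
    rfl
  | cons g l ih =>
    have h' : ¬ Red (l ++ p.1) := irr_tail (x := g) h
    rw [word_cons, map_mul, Module.End.mul_apply, ih h', φ_ι, F_single,
      f_irr K (show ¬ Red (g :: (l ++ p.1)) from h)]
    rfl

lemma psi_theta_single (p : IW n) : ψ K (θ K (Finsupp.single p 1)) = Finsupp.single p 1 := by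
  rw [θ_single]
  show Φ K (πB K n (word K n p.1)) (e0 K) = _
  rw [Φ_πB]
  have h : ¬ Red (p.1 ++ ([] : List (Gen n))) := by
    rw [List.append_nil]
    exact p.2
  have h2 := phi_word K p.1 ⟨([] : List (Gen n)), red_nil⟩ h
  rw [show (e0 K : M K n) = Finsupp.single (⟨[], red_nil⟩ : IW n) 1 from rfl, h2]
  congr 1
  exact Subtype.ext (by simp)

lemma psi_theta : (ψ K).comp (θ K (n := n)) = LinearMap.id := by
  apply Finsupp.lhom_ext
  intro p b
  have hb : (Finsupp.single p b : M K n) = b • Finsupp.single p 1 := by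
    rw [Finsupp.smul_single, smul_eq_mul, mul_one]
  rw [hb, map_smul, map_smul, LinearMap.comp_apply, psi_theta_single, LinearMap.id_apply]

lemma key2 (g : Gen n) (m : M K n) :
    πB K n (FreeAlgebra.ι K g) * θ K m = θ K (F K g m) := by
  have hmaps : (LinearMap.mulLeft K (πB K n (FreeAlgebra.ι K g))).comp (θ K) =
      (θ K).comp (F K g) := by
    apply Finsupp.lhom_ext
    intro p b
    have hb : (Finsupp.single p b : M K n) = b • Finsupp.single p 1 := by
      rw [Finsupp.smul_single, smul_eq_mul, mul_one]
    rw [hb, map_smul, map_smul, LinearMap.comp_apply, LinearMap.comp_apply,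
      LinearMap.mulLeft_apply, θ_single, F_single]
    congr 1
    rw [← map_mul, ← word_cons, key K g p.1 p.2]
  exact LinearMap.congr_fun hmaps m

lemma span_words : Submodule.span K (Set.range (word K n)) = ⊤ := by
  rw [eq_top_iff]
  rintro x -
  refine FreeAlgebra.induction K (Gen n)
    (motive := fun y => y ∈ Submodule.span K (Set.range (word K n))) ?_ ?_ ?_ ?_ x
  · intro r
    rw [Algebra.algebraMap_eq_smul_one]
    exact Submodule.smul_mem _ _ (Submodule.subset_span ⟨[], rfl⟩)
  · intro g
    exact Submodule.subset_span ⟨[g], by simp [word]⟩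
  · intro a b ha hb
    have h := Submodule.mul_mem_mul ha hb
    rw [Submodule.span_mul_span] at h
    refine Submodule.span_le.mpr ?_ h
    rintro _ ⟨u, ⟨lu, rfl⟩, v, ⟨lv, rfl⟩, rfl⟩
    exact Submodule.subset_span ⟨lu ++ lv, (word_mul K lu lv).symm⟩
  · intro a b ha hb
    exact Submodule.add_mem _ ha hb

lemma theta_psi_word (l : List (Gen n)) :
    θ K (ψ K (πB K n (word K n l))) = πB K n (word K n l) := by
  induction l with
  | nil =>
    rw [word_nil, map_one]
    show θ K (Φ K 1 (e0 K)) = 1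
    rw [map_one, Module.End.one_apply]
    show θ K (Finsupp.single (⟨[], red_nil⟩ : IW n) 1) = 1
    rw [θ_single, word_nil, map_one]
  | cons g l ih =>
    rw [word_cons, map_mul]
    have hψ : ψ K (πB K n (FreeAlgebra.ι K g) * πB K n (word K n l)) =
        F K g (ψ K (πB K n (word K n l))) := by
      show Φ K (πB K n (FreeAlgebra.ι K g) * πB K n (word K n l)) (e0 K) = _
      rw [← map_mul, Φ_πB, map_mul, Module.End.mul_apply, φ_ι]
      congr 1
      show φ K (word K n l) (e0 K) = Φ K (πB K n (word K n l)) (e0 K)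
      rw [Φ_πB]
    rw [hψ, ← key2, ih]

lemma theta_psi : (θ K (n := n)).comp (ψ K) = LinearMap.id := by
  have hsp : Submodule.span K (Set.range fun l => πB K n (word K n l)) = ⊤ := by
    rw [eq_top_iff]
    rintro b -
    obtain ⟨y, rfl⟩ := RingQuot.mkAlgHom_surjective K (BRel K n) b
    have hy : y ∈ Submodule.span K (Set.range (word K n)) := by
      rw [span_words]
      trivial
    have hmem : πB K n y ∈
        Submodule.map (πB K n).toLinearMap (Submodule.span K (Set.range (word K n))) :=
      ⟨y, hy, rfl⟩
    rw [Submodule.map_span] at hmem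
    show πB K n y ∈ _
    refine Submodule.span_mono ?_ hmem
    rintro _ ⟨_, ⟨l, rfl⟩, rfl⟩
    exact ⟨l, rfl⟩
  apply LinearMap.ext_on hsp
  rintro _ ⟨l, rfl⟩
  rw [LinearMap.comp_apply, LinearMap.id_apply]
  exact theta_psi_word K l

/-- The linear equivalence between the free module on irreducible words and `B`. -/
noncomputable def eL : M K n ≃ₗ[K] B K n :=
  LinearEquiv.ofLinear (θ K) (ψ K) (theta_psi K) (psi_theta K)

end

end Stmt0

/-- the images under `π_B` of the pure tensors containing no factor from `R'`
form a `K`-vector-space basis of `B`. -/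
theorem stmt_0 (K : Type) [Field K] (n : ℕ) :
    ∃ bas : Module.Basis {l : List (Gen n) // ¬ ∃ w ∈ Rwords' n, w <:+: l} K (B K n),
      ∀ l, bas l = πB K n (word K n l.val) := by
  refine ⟨Module.Basis.ofRepr (Stmt0.eL K (n := n)).symm, fun l => ?_⟩
  rw [Module.Basis.apply_eq_iff]
  show Stmt0.ψ K (πB K n (word K n l.1)) = Finsupp.single l 1
  rw [← Stmt0.θ_single K l]
  exact Stmt0.psi_theta_single K l
end

section
/- For every i with 0 ≤ i ≤ n, the element b_i ∈ B is left regular: for all w ∈ B, if w b_i = 0 then w = 0. -/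
noncomputable section

deriving instance DecidableEq for Gen

variable (K : Type) [Field K] (n : ℕ)

abbrev Word (n : ℕ) := List (Gen n)

abbrev M := Word n →₀ K

open FreeAlgebra Finsupp

def act : Gen n → Word n → M K n
  | .a j, .b j₁ :: .c j₂ :: w' =>
      if j₁ = j ∧ j₂ = j then
        if h2 : j.1 < n then
          if w'.head? = some (.a j) then 0
          else -(Finsupp.single (.c ⟨j.1+1, by omega⟩ :: .a ⟨j.1+1, by omega⟩ :: .b ⟨j.1+1, by omega⟩ :: w') 1)
        else 0
      else Finsupp.single (.a j :: .b j₁ :: .c j₂ :: w') 1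
  | .b j, .a j₁ :: w' => if j₁.1 + 1 = j.1 then 0 else Finsupp.single (.b j :: .a j₁ :: w') 1
  | .b j, .c j₁ :: .a j₂ :: w' =>
      if j₁ = j ∧ j₂ = j ∧ 1 ≤ j.1 then 0 else Finsupp.single (.b j :: .c j₁ :: .a j₂ :: w') 1
  | .c j, .a j₁ :: w' => if j.1 = 0 ∧ j₁.1 = 0 then 0 else Finsupp.single (.c j :: .a j₁ :: w') 1
  | .c j, .c j₁ :: w' => if j.1 + 1 = j₁.1 then 0 else Finsupp.single (.c j :: .c j₁ :: w') 1
  | g, w => Finsupp.single (g :: w) 1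

def actL (g : Gen n) : M K n →ₗ[K] M K n :=
  Finsupp.lsum K fun w => LinearMap.smulRight (LinearMap.id : K →ₗ[K] K) (act K n g w)

@[simp] lemma actL_single (g : Gen n) (w : Word n) (k : K) :
    actL K n g (Finsupp.single w k) = k • act K n g w := by
  simp [actL]

def rep : FreeAlgebra K (Gen n) →ₐ[K] Module.End K (M K n) :=
  FreeAlgebra.lift K (actL K n)

@[simp] lemma rep_ι (g : Gen n) : rep K n (FreeAlgebra.ι K g) = actL K n g := by
  simp [rep]

-- sanity evaluations
example (j : Fin (n+1)) : act K n (.b j) [] = Finsupp.single [Gen.b j] 1 := by simp [act]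
example (j : Fin (n+1)) (w : Word n) : act K n (.b j) (.b j :: w) = Finsupp.single (.b j :: .b j :: w) 1 := by
  simp [act]

lemma act_ba (j j' : Fin (n+1)) (h : j'.1 + 1 = j.1) (w : Word n) :
    actL K n (.b j) (act K n (.a j') w) = 0 := by
  rcases w with _ | ⟨(j₁|j₁|j₁), (_ | ⟨(j₂|j₂|j₂), w₂⟩)⟩ <;>
    simp only [act, actL_single, one_smul] <;>
    split_ifs <;>
    simp_all [act, Fin.ext_iff, -Fin.val_inj, -Fin.val_eq_zero_iff] <;>
    omega

set_option linter.unnecessarySeqFocus false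
set_option linter.unreachableTactic false
set_option linter.unusedTactic false
set_option maxHeartbeats 1000000

lemma act_ca (j j' : Fin (n+1)) (h : j.1 = 0) (h' : j'.1 = 0) (w : Word n) :
    actL K n (.c j) (act K n (.a j') w) = 0 := by
  rcases w with _ | ⟨(j₁|j₁|j₁), (_ | ⟨(j₂|j₂|j₂), w₂⟩)⟩ <;>
    simp only [act, actL_single, one_smul] <;>
    split_ifs <;>
    simp_all [act, Fin.ext_iff, -Fin.val_inj, -Fin.val_eq_zero_iff] <;>
    (try omega) <;>
    (try (split_ifs <;> simp_all [act, Fin.ext_iff, -Fin.val_inj, -Fin.val_eq_zero_iff] <;> (try omega))) <;>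
    (try (split_ifs <;> simp_all [act, Fin.ext_iff, -Fin.val_inj, -Fin.val_eq_zero_iff] <;> (try omega)))

lemma act_cc (j j' : Fin (n+1)) (h : j.1 + 1 = j'.1) (w : Word n) :
    actL K n (.c j) (act K n (.c j') w) = 0 := by
  rcases w with _ | ⟨(j₁|j₁|j₁), (_ | ⟨(j₂|j₂|j₂), w₂⟩)⟩ <;>
    simp only [act, actL_single, one_smul] <;>
    split_ifs <;>
    simp_all [act, Fin.ext_iff, -Fin.val_inj, -Fin.val_eq_zero_iff] <;>
    (try omega) <;>
    (try (split_ifs <;> simp_all [act, Fin.ext_iff, -Fin.val_inj, -Fin.val_eq_zero_iff] <;> (try omega))) <;>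
    (try (split_ifs <;> simp_all [act, Fin.ext_iff, -Fin.val_inj, -Fin.val_eq_zero_iff] <;> (try omega)))

lemma act_bca (j : Fin (n+1)) (h : 1 ≤ j.1) (w : Word n) :
    actL K n (.b j) (actL K n (.c j) (act K n (.a j) w)) = 0 := by
  rcases w with _ | ⟨(j₁|j₁|j₁), (_ | ⟨(j₂|j₂|j₂), w₂⟩)⟩ <;>
    simp only [act, actL_single, one_smul] <;>
    split_ifs <;>
    simp_all [act, Fin.ext_iff, -Fin.val_inj, -Fin.val_eq_zero_iff] <;>
    (try omega) <;>
    (try (split_ifs <;> simp_all [act, Fin.ext_iff, -Fin.val_inj, -Fin.val_eq_zero_iff] <;> (try omega))) <;>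
    (try (split_ifs <;> simp_all [act, Fin.ext_iff, -Fin.val_inj, -Fin.val_eq_zero_iff] <;> (try omega)))

lemma act_abc_n (j : Fin (n+1)) (h : j.1 = n) (w : Word n) :
    actL K n (.a j) (actL K n (.b j) (act K n (.c j) w)) = 0 := by
  rcases w with _ | ⟨(j₁|j₁|j₁), (_ | ⟨(j₂|j₂|j₂), w₂⟩)⟩ <;>
    simp only [act, actL_single, one_smul] <;>
    split_ifs <;>
    simp_all [act, Fin.ext_iff, -Fin.val_inj, -Fin.val_eq_zero_iff] <;>
    (try omega) <;>
    (try (split_ifs <;> simp_all [act, Fin.ext_iff, -Fin.val_inj, -Fin.val_eq_zero_iff] <;> (try omega))) <;>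
    (try (split_ifs <;> simp_all [act, Fin.ext_iff, -Fin.val_inj, -Fin.val_eq_zero_iff] <;> (try omega)))

lemma act_r3 (j k : Fin (n+1)) (h : j.1 + 1 = k.1) (w : Word n) :
    actL K n (.a j) (actL K n (.b j) (act K n (.c j) w))
      + actL K n (.c k) (actL K n (.a k) (act K n (.b k) w)) = 0 := by
  rcases w with _ | ⟨(j₁|j₁|j₁), (_ | ⟨(j₂|j₂|j₂), w₂⟩)⟩ <;>
    simp only [act, actL_single, one_smul] <;>
    split_ifs <;>
    simp_all [act, Fin.ext_iff, -Fin.val_inj, -Fin.val_eq_zero_iff] <;>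
    (try omega) <;>
    (try (split_ifs <;> simp_all [act, Fin.ext_iff, -Fin.val_inj, -Fin.val_eq_zero_iff] <;> (try omega))) <;>
    (try (split_ifs <;> simp_all [act, Fin.ext_iff, -Fin.val_inj, -Fin.val_eq_zero_iff] <;> (try omega)))

lemma ga_nat (i : ℕ) (h : i ≤ n) :
    ga K n i = FreeAlgebra.ι K (Gen.a ⟨i, Nat.lt_succ_of_le h⟩) := by
  rw [ga, dif_pos ⟨Int.natCast_nonneg i, by exact_mod_cast h⟩]
  congr 1

lemma gb_nat (i : ℕ) (h : i ≤ n) :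
    gb K n i = FreeAlgebra.ι K (Gen.b ⟨i, Nat.lt_succ_of_le h⟩) := by
  rw [gb, dif_pos ⟨Int.natCast_nonneg i, by exact_mod_cast h⟩]
  congr 1

lemma gc_nat (i : ℕ) (h : i ≤ n) :
    gc K n i = FreeAlgebra.ι K (Gen.c ⟨i, Nat.lt_succ_of_le h⟩) := by
  rw [gc, dif_pos ⟨Int.natCast_nonneg i, by exact_mod_cast h⟩]
  congr 1

lemma ga_nat' (i : ℕ) (h : i + 1 ≤ n) :
    ga K n (↑i + 1) = FreeAlgebra.ι K (Gen.a ⟨i+1, by omega⟩) := by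
  have e : ((i:ℤ)+1) = ((i+1:ℕ):ℤ) := by push_cast; ring
  rw [e, ga_nat K n (i+1) h]

lemma gb_nat' (i : ℕ) (h : i + 1 ≤ n) :
    gb K n (↑i + 1) = FreeAlgebra.ι K (Gen.b ⟨i+1, by omega⟩) := by
  have e : ((i:ℤ)+1) = ((i+1:ℕ):ℤ) := by push_cast; ring
  rw [e, gb_nat K n (i+1) h]

lemma gc_nat' (i : ℕ) (h : i + 1 ≤ n) :
    gc K n (↑i + 1) = FreeAlgebra.ι K (Gen.c ⟨i+1, by omega⟩) := by
  have e : ((i:ℤ)+1) = ((i+1:ℕ):ℤ) := by push_cast; ring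
  rw [e, gc_nat K n (i+1) h]

lemma rep_rels : ∀ x ∈ rels K n, rep K n x = 0 := by
  rintro x (h | h | ⟨i, hi, h | h | h | h⟩) <;> subst h
  · rw [ga_nat K n n le_rfl, gb_nat K n n le_rfl, gc_nat K n n le_rfl,
      map_mul, map_mul, rep_ι, rep_ι, rep_ι]
    refine Finsupp.lhom_ext fun w k => ?_
    have h0 := act_abc_n K n ⟨n, by omega⟩ rfl w
    simp [Module.End.mul_apply, actL_single, map_smul, h0]
  · rw [show (0:ℤ) = ((0:ℕ):ℤ) by norm_num] at *
    rw [gc_nat K n 0 (by omega), ga_nat K n 0 (by omega), map_mul, rep_ι, rep_ι]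
    refine Finsupp.lhom_ext fun w k => ?_
    have h0 := act_ca K n 0 0 (by simp) (by simp) w
    simp [Module.End.mul_apply, actL_single, map_smul, h0]
  · rw [ga_nat K n i (by omega), gb_nat K n i (by omega), gc_nat K n i (by omega),
      ga_nat' K n i (by omega), gb_nat' K n i (by omega), gc_nat' K n i (by omega),
      map_add, map_mul, map_mul, map_mul, map_mul, rep_ι, rep_ι, rep_ι, rep_ι, rep_ι, rep_ι]
    refine Finsupp.lhom_ext fun w k => ?_
    have h0 := act_r3 K n ⟨i, by omega⟩ ⟨i+1, by omega⟩ rfl w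
    simp only [LinearMap.add_apply, Module.End.mul_apply, actL_single, map_smul,
      LinearMap.zero_apply]
    rw [← smul_add, h0, smul_zero]
  · rw [gb_nat' K n i (by omega), gc_nat' K n i (by omega), ga_nat' K n i (by omega),
      map_mul, map_mul, rep_ι, rep_ι, rep_ι]
    refine Finsupp.lhom_ext fun w k => ?_
    have h0 := act_bca K n ⟨i+1, by omega⟩ (by simp) w
    simp [Module.End.mul_apply, actL_single, map_smul, h0]
  · rw [gc_nat K n i (by omega), gc_nat' K n i (by omega), map_mul, rep_ι, rep_ι]
    refine Finsupp.lhom_ext fun w k => ?_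
    have h0 := act_cc K n ⟨i, by omega⟩ ⟨i+1, by omega⟩ rfl w
    simp [Module.End.mul_apply, actL_single, map_smul, h0]
  · rw [gb_nat' K n i (by omega), ga_nat K n i (by omega), map_mul, rep_ι, rep_ι]
    refine Finsupp.lhom_ext fun w k => ?_
    have h0 := act_ba K n ⟨i+1, by omega⟩ ⟨i, by omega⟩ rfl w
    simp [Module.End.mul_apply, actL_single, map_smul, h0]

lemma piB_rel (x : FreeAlgebra K (Gen n)) (hx : x ∈ rels K n) : πB K n x = 0 := by
  have := RingQuot.mkAlgHom_rel K (s := BRel K n) (x := x) (y := 0) ⟨hx, rfl⟩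
  simpa [πB] using this

def wp : Word n → FreeAlgebra K (Gen n) := fun w => (w.map (FreeAlgebra.ι K)).prod

@[simp] lemma wp_nil : wp K n [] = 1 := rfl

@[simp] lemma wp_cons (g : Gen n) (w : Word n) :
    wp K n (g :: w) = FreeAlgebra.ι K g * wp K n w := by simp [wp]

def Jmap : M K n →ₗ[K] FreeAlgebra K (Gen n) :=
  Finsupp.lsum K fun w => LinearMap.smulRight (LinearMap.id : K →ₗ[K] K) (wp K n w)

@[simp] lemma Jmap_single (w : Word n) (k : K) :
    Jmap K n (Finsupp.single w k) = k • wp K n w := by simp [Jmap]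

-- helper vanishing lemmas in `πB`
lemma piB_ba_t (j j₁ : Fin (n+1)) (h : j₁.1 + 1 = j.1) (x : RingQuot (BRel K n)) :
    πB K n (FreeAlgebra.ι K (.b j)) * (πB K n (FreeAlgebra.ι K (.a j₁)) * x) = 0 := by
  have hm : (gb K n (j₁.1+1) * ga K n j₁.1) ∈ rels K n :=
    Or.inr (Or.inr ⟨j₁.1, by omega, by tauto⟩)
  have h0 := piB_rel K n _ hm
  rw [gb_nat' K n j₁.1 (by omega), ga_nat K n j₁.1 (by omega), map_mul] at h0
  have hj : j = ⟨j₁.1+1, by omega⟩ := Fin.ext (by simp; omega)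
  rw [hj]
  simp only [Fin.eta] at h0 ⊢
  rw [← mul_assoc, h0, zero_mul]

lemma piB_ca_t (j j₁ : Fin (n+1)) (h : j.1 = 0) (h' : j₁.1 = 0) (x : RingQuot (BRel K n)) :
    πB K n (FreeAlgebra.ι K (.c j)) * (πB K n (FreeAlgebra.ι K (.a j₁)) * x) = 0 := by
  have hm : (gc K n 0 * ga K n 0) ∈ rels K n := Or.inr (Or.inl rfl)
  have h0 := piB_rel K n _ hm
  rw [show (0:ℤ) = ((0:ℕ):ℤ) by norm_num] at h0
  rw [gc_nat K n 0 (by omega), ga_nat K n 0 (by omega), map_mul] at h0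
  have hj : j = ⟨0, by omega⟩ := Fin.ext (by exact h)
  have hj' : j₁ = ⟨0, by omega⟩ := Fin.ext (by exact h')
  rw [hj, hj', ← mul_assoc, h0, zero_mul]

lemma piB_cc_t (j j₁ : Fin (n+1)) (h : j.1 + 1 = j₁.1) (x : RingQuot (BRel K n)) :
    πB K n (FreeAlgebra.ι K (.c j)) * (πB K n (FreeAlgebra.ι K (.c j₁)) * x) = 0 := by
  have hm : (gc K n j.1 * gc K n (j.1+1)) ∈ rels K n :=
    Or.inr (Or.inr ⟨j.1, by omega, by tauto⟩)
  have h0 := piB_rel K n _ hm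
  rw [gc_nat K n j.1 (by omega), gc_nat' K n j.1 (by omega), map_mul] at h0
  have hj : j₁ = ⟨j.1+1, by omega⟩ := Fin.ext (by simp; omega)
  rw [hj]
  simp only [Fin.eta] at h0 ⊢
  rw [← mul_assoc, h0, zero_mul]

lemma piB_bca_t (j : Fin (n+1)) (h : 1 ≤ j.1) (x : RingQuot (BRel K n)) :
    πB K n (FreeAlgebra.ι K (.b j)) * (πB K n (FreeAlgebra.ι K (.c j)) *
      (πB K n (FreeAlgebra.ι K (.a j)) * x)) = 0 := by
  have hm : (gb K n (((j.1-1 : ℕ):ℤ)+1) * gc K n (((j.1-1 : ℕ):ℤ)+1) * ga K n (((j.1-1 : ℕ):ℤ)+1)) ∈ rels K n :=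
    Or.inr (Or.inr ⟨j.1-1, by omega, by tauto⟩)
  have h0 := piB_rel K n _ hm
  rw [gb_nat' K n (j.1-1) (by omega), gc_nat' K n (j.1-1) (by omega),
    ga_nat' K n (j.1-1) (by omega), map_mul, map_mul] at h0
  have hj : j = ⟨(j.1-1)+1, by omega⟩ := Fin.ext (by simp; omega)
  rw [hj] at *
  rw [← mul_assoc, ← mul_assoc, h0, zero_mul]

lemma piB_abc_n_t (j : Fin (n+1)) (h : j.1 = n) (x : RingQuot (BRel K n)) :
    πB K n (FreeAlgebra.ι K (.a j)) * (πB K n (FreeAlgebra.ι K (.b j)) *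
      (πB K n (FreeAlgebra.ι K (.c j)) * x)) = 0 := by
  have hm : (ga K n n * gb K n n * gc K n n) ∈ rels K n := Or.inl rfl
  have h0 := piB_rel K n _ hm
  rw [ga_nat K n n le_rfl, gb_nat K n n le_rfl, gc_nat K n n le_rfl, map_mul, map_mul] at h0
  have hj : j = ⟨n, by omega⟩ := Fin.ext (by simp; omega)
  rw [hj, ← mul_assoc, ← mul_assoc, h0, zero_mul]

lemma piB_r3_t (j k : Fin (n+1)) (h : j.1 + 1 = k.1) (x : RingQuot (BRel K n)) :
    πB K n (FreeAlgebra.ι K (.a j)) * (πB K n (FreeAlgebra.ι K (.b j)) *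
      (πB K n (FreeAlgebra.ι K (.c j)) * x)) +
    πB K n (FreeAlgebra.ι K (.c k)) * (πB K n (FreeAlgebra.ι K (.a k)) *
      (πB K n (FreeAlgebra.ι K (.b k)) * x)) = 0 := by
  have hm : (ga K n j.1 * gb K n j.1 * gc K n j.1
      + gc K n (j.1+1) * ga K n (j.1+1) * gb K n (j.1+1)) ∈ rels K n :=
    Or.inr (Or.inr ⟨j.1, by omega, by tauto⟩)
  have h0 := piB_rel K n _ hm
  rw [ga_nat K n j.1 (by omega), gb_nat K n j.1 (by omega), gc_nat K n j.1 (by omega),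
    ga_nat' K n j.1 (by omega), gb_nat' K n j.1 (by omega), gc_nat' K n j.1 (by omega),
    map_add, map_mul, map_mul, map_mul, map_mul] at h0
  have hk : k = ⟨j.1+1, by omega⟩ := Fin.ext (by simp; omega)
  rw [hk]
  simp only [Fin.eta] at h0 ⊢
  have h2 := congrArg (· * x) h0
  simp only [add_mul, zero_mul, mul_assoc] at h2
  exact h2

lemma C1 (g : Gen n) (w : Word n) :
    πB K n (wp K n (g :: w)) = πB K n (Jmap K n (act K n g w)) := by
  rcases g with j | j | j
  · -- g = a j
    rcases w with _ | ⟨(j₁|j₁|j₁), w'⟩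
    · simp [act]
    · simp [act]
    · rcases w' with _ | ⟨(j₂|j₂|j₂), w₂⟩
      · simp [act]
      · simp [act]
      · simp [act]
      · -- w = b j₁ :: c j₂ :: w₂
        by_cases hc : j₁ = j ∧ j₂ = j
        · simp only [hc.1, hc.2]
          simp only [act, if_pos (⟨rfl, rfl⟩ : j = j ∧ j = j)]
          by_cases hn : j.1 < n
          · rw [dif_pos hn]
            by_cases hh : w₂.head? = some (.a j)
            · rw [if_pos hh]
              rcases w₂ with _ | ⟨g₃, w₃⟩
              · simp at hh
              · have hg₃ : g₃ = .a j := by simpa using hh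
                subst hg₃
                simp only [map_zero, wp_cons, map_mul]
                have h1 := piB_r3_t K n j ⟨j.1+1, by omega⟩ (by simp)
                  (πB K n (FreeAlgebra.ι K (Gen.a j)) * πB K n (wp K n w₃))
                rw [piB_ba_t K n ⟨j.1+1, by omega⟩ j (by simp)] at h1
                simpa using h1
            · rw [if_neg hh]
              simp only [map_neg, Jmap_single, one_smul, map_neg, wp_cons, map_mul]
              simpa using eq_neg_of_add_eq_zero_left
                (piB_r3_t K n j ⟨j.1+1, by omega⟩ (by simp) (πB K n (wp K n w₂)))
          · rw [dif_neg hn]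
            simp only [map_zero, wp_cons, map_mul]
            simpa using piB_abc_n_t K n j (by omega) (πB K n (wp K n w₂))
        · simp [act, hc]
    · simp [act]
  · -- g = b j
    rcases w with _ | ⟨(j₁|j₁|j₁), w'⟩
    · simp [act]
    · by_cases hc : j₁.1 + 1 = j.1
      · simp only [act, if_pos hc, map_zero, wp_cons, map_mul]
        exact piB_ba_t K n j j₁ hc (πB K n (wp K n w'))
      · simp [act, hc]
    · simp [act]
    · rcases w' with _ | ⟨(j₂|j₂|j₂), w₂⟩
      · simp [act]
      · by_cases hc : j₁ = j ∧ j₂ = j ∧ 1 ≤ j.1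
        · have h1 := hc.2.2
          simp only [hc.1, hc.2.1]
          simp only [act, if_pos (⟨rfl, rfl, h1⟩ : j = j ∧ j = j ∧ 1 ≤ j.1),
            map_zero, wp_cons, map_mul]
          simpa [h1] using piB_bca_t K n j h1 (πB K n (wp K n w₂))
        · simp [act, hc]
      · simp [act]
      · simp [act]
  · -- g = c j
    rcases w with _ | ⟨(j₁|j₁|j₁), w'⟩
    · simp [act]
    · by_cases hc : j.1 = 0 ∧ j₁.1 = 0
      · simp only [act, if_pos hc, map_zero, wp_cons, map_mul]
        exact piB_ca_t K n j j₁ hc.1 hc.2 (πB K n (wp K n w'))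
      · simp only [act]; rw [if_neg hc]; simp
    · simp [act]
    · by_cases hc : j.1 + 1 = j₁.1
      · simp only [act, if_pos hc, map_zero, wp_cons, map_mul]
        exact piB_cc_t K n j j₁ hc (πB K n (wp K n w'))
      · simp [act, hc]

lemma Qmul (x : FreeAlgebra K (Gen n)) : ∀ (V : M K n),
    πB K n x * πB K n (Jmap K n V) = πB K n (Jmap K n (rep K n x V)) := by
  induction x using FreeAlgebra.induction with
  | grade0 r =>
    intro V
    simp only [AlgHom.commutes, Module.algebraMap_end_apply, map_smul, Algebra.smul_def]
    rw [map_mul, AlgHom.commutes]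
  | grade1 g =>
    intro V
    induction V using Finsupp.induction_linear with
    | zero => simp
    | add f g hf hg => simp only [map_add, mul_add, hf, hg]
    | single w k =>
      simp only [rep_ι, actL_single, Jmap_single, map_smul, mul_smul_comm]
      rw [← map_mul, ← wp_cons, C1]
  | mul x y hx hy =>
    intro V
    rw [map_mul, mul_assoc, hy, hx, map_mul, Module.End.mul_apply]
  | add x y hx hy =>
    intro V
    simp only [map_add, add_mul, hx, hy, LinearMap.add_apply]

lemma C3 (x : FreeAlgebra K (Gen n)) :
    πB K n x = πB K n (Jmap K n (rep K n x (Finsupp.single [] 1))) := by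
  have h := Qmul K n x (Finsupp.single [] 1)
  simpa [wp] using h

def Bad : Gen n → Word n → Prop
  | .a j, .b j₁ :: .c j₂ :: _ => j₁ = j ∧ j₂ = j
  | .b j, .a j₁ :: _ => j₁.1 + 1 = j.1
  | .b j, .c j₁ :: .a j₂ :: _ => j₁ = j ∧ j₂ = j ∧ 1 ≤ j.1
  | .c j, .a j₁ :: _ => j.1 = 0 ∧ j₁.1 = 0
  | .c j, .c j₁ :: _ => j.1 + 1 = j₁.1
  | _, _ => False

def Nrm : Word n → Prop
  | [] => True
  | g :: w => ¬ Bad n g w ∧ Nrm w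

@[simp] lemma Normal_nil : Nrm n ([] : Word n) := trivial

@[simp] lemma Normal_cons (g : Gen n) (w : Word n) :
    Nrm n (g :: w) ↔ ¬ Bad n g w ∧ Nrm n w := Iff.rfl

lemma act_normal (g : Gen n) (w : Word n) (h : ¬ Bad n g w) :
    act K n g w = Finsupp.single (g :: w) 1 := by
  rcases g with j|j|j <;>
    rcases w with _ | ⟨(j₁|j₁|j₁), (_ | ⟨(j₂|j₂|j₂), w₂⟩)⟩ <;>
    simp_all [act, Bad]

def P : Submodule K (M K n) := Finsupp.supported K K {u : Word n | Nrm n u}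

lemma single_mem_P (u : Word n) (k : K) (h : Nrm n u) :
    Finsupp.single u k ∈ P K n :=
  Finsupp.single_mem_supported K k h

lemma act_supported (g : Gen n) (w : Word n) (h : Nrm n w) :
    act K n g w ∈ P K n := by
  rcases g with j | j | j
  · rcases w with _ | ⟨(j₁|j₁|j₁), w'⟩
    · exact single_mem_P K n _ _ (by simp_all [Bad, act])
    · exact (by simp only [act]; exact single_mem_P K n _ _ (by simp_all [Bad]))
    · rcases w' with _ | ⟨(j₂|j₂|j₂), w₂⟩
      · exact (by simp only [act]; exact single_mem_P K n _ _ (by simp_all [Bad]))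
      · exact (by simp only [act]; exact single_mem_P K n _ _ (by simp_all [Bad]))
      · exact (by simp only [act]; exact single_mem_P K n _ _ (by simp_all [Bad]))
      · -- w = b j₁ :: c j₂ :: w₂
        by_cases hc : j₁ = j ∧ j₂ = j
        · simp only [hc.1, hc.2] at h ⊢
          simp only [act, if_pos (⟨rfl, rfl⟩ : j = j ∧ j = j)]
          by_cases hn : j.1 < n
          · rw [dif_pos hn]
            by_cases hh : w₂.head? = some (.a j)
            · rw [if_pos hh]; exact zero_mem _
            · rw [if_neg hh]
              refine neg_mem (single_mem_P K n _ _ ?_)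
              -- cascade normality
              obtain ⟨h1, h2, h3⟩ :
                  ¬ Bad n (.b j) (.c j :: w₂) ∧ ¬ Bad n (.c j) w₂ ∧ Nrm n w₂ :=
                ⟨h.1, h.2.1, h.2.2⟩
              refine ⟨?_, ?_, ?_, h3⟩
              · simp [Bad]
              · rcases w₂ with _ | ⟨(j₄|j₄|j₄), w₃⟩ <;> simp_all [Bad, Fin.ext_iff, -Fin.val_inj, -Fin.val_eq_zero_iff] <;> omega
              · rcases w₂ with _ | ⟨(j₄|j₄|j₄), _ | ⟨(j₅|j₅|j₅), w₄⟩⟩ <;>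
                  simp_all [Bad, Fin.ext_iff, -Fin.val_inj, -Fin.val_eq_zero_iff] <;> omega
          · rw [dif_neg hn]; exact zero_mem _
        · simp only [act]
          rw [if_neg hc]
          exact single_mem_P K n _ _ (by simp_all [Bad])
    · exact (by simp only [act]; exact single_mem_P K n _ _ (by simp_all [Bad]))
  · rcases w with _ | ⟨(j₁|j₁|j₁), w'⟩
    · exact single_mem_P K n _ _ (by simp_all [Bad, act])
    · by_cases hc : j₁.1 + 1 = j.1
      · simp only [act, if_pos hc]; exact zero_mem _
      · simp only [act]; rw [if_neg hc]
        exact single_mem_P K n _ _ (by simp_all [Bad])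
    · exact (by simp only [act]; exact single_mem_P K n _ _ (by simp_all [Bad]))
    · rcases w' with _ | ⟨(j₂|j₂|j₂), w₂⟩
      · exact (by simp only [act]; exact single_mem_P K n _ _ (by simp_all [Bad]))
      · by_cases hc : j₁ = j ∧ j₂ = j ∧ 1 ≤ j.1
        · simp only [act, if_pos hc]; exact zero_mem _
        · simp only [act]; rw [if_neg hc]
          exact single_mem_P K n _ _ (by simp_all [Bad])
      · exact (by simp only [act]; exact single_mem_P K n _ _ (by simp_all [Bad]))
      · exact (by simp only [act]; exact single_mem_P K n _ _ (by simp_all [Bad]))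
  · rcases w with _ | ⟨(j₁|j₁|j₁), w'⟩
    · exact single_mem_P K n _ _ (by simp_all [Bad, act])
    · by_cases hc : j.1 = 0 ∧ j₁.1 = 0
      · simp only [act, if_pos hc]; exact zero_mem _
      · simp only [act]; rw [if_neg hc]
        exact single_mem_P K n _ _ (by simp_all [Bad])
    · exact (by simp only [act]; exact single_mem_P K n _ _ (by simp_all [Bad]))
    · by_cases hc : j.1 + 1 = j₁.1
      · simp only [act, if_pos hc]; exact zero_mem _
      · simp only [act]; rw [if_neg hc]
        exact single_mem_P K n _ _ (by simp_all [Bad])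

lemma rep_P (x : FreeAlgebra K (Gen n)) : ∀ V ∈ P K n, rep K n x V ∈ P K n := by
  induction x using FreeAlgebra.induction with
  | grade0 r =>
    intro V hV
    simpa [Module.algebraMap_end_apply] using Submodule.smul_mem _ r hV
  | grade1 g =>
    intro V hV
    rw [rep_ι]
    have hV' : V ∈ Submodule.span K
        ((fun w => Finsupp.single w (1:K)) '' {u : Word n | Nrm n u}) := by
      have := hV
      rwa [P, Finsupp.supported_eq_span_single] at this
    refine Submodule.span_induction (p := fun v _ => actL K n g v ∈ P K n)
      ?_ ?_ ?_ ?_ hV'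
    · rintro v ⟨u, hu, rfl⟩
      rw [actL_single, one_smul]
      exact act_supported K n g u hu
    · simp only [map_zero]; exact zero_mem _
    · intro a b _ _ ha hb
      rw [map_add]; exact add_mem ha hb
    · intro k v _ hv
      rw [map_smul]; exact Submodule.smul_mem _ _ hv
  | mul x y hx hy =>
    intro V hV
    rw [map_mul, Module.End.mul_apply]
    exact hx _ (hy _ hV)
  | add x y hx hy =>
    intro V hV
    rw [map_add, LinearMap.add_apply]
    exact add_mem (hx _ hV) (hy _ hV)

lemma nrm_append_b (i : Fin (n+1)) : ∀ (w : Word n), Nrm n w → Nrm n (w ++ [Gen.b i]) := by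
  intro w
  induction w with
  | nil => intro _; exact ⟨by simp [Bad], trivial⟩
  | cons g w ih =>
    intro h
    refine ⟨?_, ih h.2⟩
    have hb := h.1
    rcases g with j|j|j <;>
      rcases w with _ | ⟨(j₁|j₁|j₁), _ | ⟨(j₂|j₂|j₂), w₂⟩⟩ <;>
      simp_all [Bad]

lemma rep_wp_single : ∀ (u v : Word n), Nrm n (u ++ v) →
    rep K n (wp K n u) (Finsupp.single v (1:K)) = Finsupp.single (u ++ v) 1 := by
  intro u
  induction u with
  | nil => intro v _; simp [wp]
  | cons g u ih =>
    intro v h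
    rw [wp_cons, map_mul, Module.End.mul_apply, ih v h.2, rep_ι, actL_single, one_smul,
      act_normal K n g (u ++ v) h.1]
    rfl

def Dmap : M K n →ₗ[K] M K n := Finsupp.lmapDomain K K List.dropLast

def repB : RingQuot (BRel K n) →ₐ[K] Module.End K (M K n) :=
  RingQuot.liftAlgHom K ⟨rep K n, fun x y h => by
    obtain ⟨hx, rfl⟩ := h; rw [rep_rels K n x hx, map_zero]⟩

lemma repB_piB (x : FreeAlgebra K (Gen n)) : repB K n (πB K n x) = rep K n x := by
  rw [πB, repB]
  exact RingQuot.liftAlgHom_mkAlgHom_apply _ _ _ _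

lemma key_strip (ib : Fin (n+1)) : ∀ v ∈ P K n,
    Dmap K n (rep K n (Jmap K n v) (Finsupp.single [Gen.b ib] (1:K))) = v := by
  intro v hv
  have hv' : v ∈ Submodule.span K
      ((fun w => Finsupp.single w (1:K)) '' {u : Word n | Nrm n u}) := by
    have := hv
    rwa [P, Finsupp.supported_eq_span_single] at this
  refine Submodule.span_induction
    (p := fun v _ => Dmap K n (rep K n (Jmap K n v) (Finsupp.single [Gen.b ib] (1:K))) = v)
    ?_ ?_ ?_ ?_ hv'
  · rintro v ⟨u, hu, rfl⟩
    rw [Jmap_single, one_smul, rep_wp_single K n u [Gen.b ib] (nrm_append_b n ib u hu)]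
    simp [Dmap, Finsupp.lmapDomain_apply, Finsupp.mapDomain_single]
  · simp
  · intro a b _ _ ha hb
    simp only [map_add, LinearMap.add_apply] at *
    rw [ha, hb]
  · intro k x _ hx
    simp only [map_smul, LinearMap.smul_apply] at *
    rw [hx]

theorem main_reg (i : ℕ) (hi : i ≤ n) :
    ∀ W : RingQuot (BRel K n), W * πB K n (gb K n i) = 0 → W = 0 := by
  intro W hW
  obtain ⟨x, rfl⟩ := RingQuot.mkAlgHom_surjective K (BRel K n) W
  have hW' : πB K n (x * gb K n i) = 0 := by rw [map_mul]; exact hW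
  rw [gb_nat K n i hi] at hW'
  set bg : Gen n := Gen.b ⟨i, Nat.lt_succ_of_le hi⟩ with hbg
  have hrep : rep K n (x * FreeAlgebra.ι K bg) = 0 := by
    have h := congrArg (repB K n) hW'
    rwa [repB_piB, map_zero] at h
  have h2 : rep K n x (Finsupp.single [bg] (1:K)) = 0 := by
    have h3 := congrArg
      (fun f : Module.End K (M K n) => f (Finsupp.single ([] : Word n) (1:K))) hrep
    simp only [map_mul, Module.End.mul_apply, rep_ι, actL_single, one_smul,
      LinearMap.zero_apply] at h3
    rwa [act_normal K n bg [] (by simp [Bad])] at h3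
  set V := rep K n x (Finsupp.single ([] : Word n) (1:K)) with hVdef
  have hPV : V ∈ P K n := rep_P K n x _ (single_mem_P K n [] 1 trivial)
  have hC3 := C3 K n x
  have hrepJ : rep K n (Jmap K n V) = rep K n x := by
    have h := congrArg (repB K n) hC3
    rw [repB_piB, repB_piB] at h
    exact h.symm
  have hEV : rep K n (Jmap K n V) (Finsupp.single [bg] (1:K)) = 0 := by
    rw [hrepJ]; exact h2
  have hV0 : V = 0 := by
    have h := key_strip K n ⟨i, Nat.lt_succ_of_le hi⟩ V hPV
    rw [← hbg] at h
    rw [hEV, map_zero] at h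
    exact h.symm
  show πB K n x = 0
  rw [hC3, ← hVdef, hV0, map_zero, map_zero]

end

/-- for `0 ≤ i ≤ n`, the element `b_i ∈ B` is left regular. -/
theorem stmt_2 (K : Type) [Field K] (n : ℕ) (i : ℕ) (hi : i ≤ n) :
    ∀ w : B K n, w * bB K n i = 0 → w = 0 := by
  intro w hw
  exact main_reg K n i hi w hw
end

section
/- Let A be an augmented K-algebra with augmentation ε : A → K and A₊ = ker ε, and let (Q_•, d_•) be a minimal resolution of the trivial left A-module K = A/A₊ by projective left A-modules with Q₀ = A, minimality meaning im(d_j) ⊆ A₊ Q_{j−1} for all j ≥ 1. Fix n ≥ 0; let U^n denote the space of families f = (f_j : Q_j → Q_{j−n})_j of A-module maps, Z^n ⊆ U^n the cocycles (∂(f) = 0) and B^n ⊆ Z^n the coboundaries (f = ∂(h) for some h ∈ U^{n−1}), where ∂(f) = d∘f − (−1)^{|f|} f∘d. Define the K-linear map p : U^n → Hom_A(Q_n, K) by p(f) = ε ∘ f_n. If H ⊆ Z^n is a K-subspace such that p restricts to a bijection from H onto Hom_A(Q_n, K), then Z^n = B^n ⊕ H (internal direct sum of K-vector spaces). -/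
section

variable (K : Type) [Field K] (A : Type) [Ring A] [Algebra K A]
variable (Q : ℕ → Type) [∀ j, AddCommGroup (Q j)] [∀ j, Module A (Q j)]
variable (d : ∀ j, Q (j+1) →ₗ[A] Q j)

/-- A family `f ∈ U^n` (encoded by its components `f m : Q (n+m) → Q m` in degrees `≥ n`;
lower components are zero) is a cocycle if `∂(f) = 0`, i.e.
`d ∘ f_j = (−1)ⁿ f_{j−1} ∘ d_j` for all `j > n`. -/
def IsCocycle (n : ℕ) (f : ∀ m, Q (n + m) →ₗ[A] Q m) : Prop :=
  ∀ m, (d m) ∘ₗ (f (m+1)) =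
    ((-1 : ℤ)^n) • (((f m) ∘ₗ (d (n + m)) : Q (n + (m+1)) →ₗ[A] Q m))

/-- A family `g ∈ U^n` is a coboundary if `g = ∂(h)` for some `h ∈ U^{n−1}`;
for `n ≥ 1` such an `h` has components `h m : Q (n+m) → Q (m+1)` in degrees `≥ n` together
with one extra component `h' : Q (n−1) → Q 0`, and `∂(h)_j = d ∘ h_j − (−1)^{n−1} h_{j−1} ∘ d_j`;
for `n = 0`, `h ∈ U^{-1}` has components `h m : Q m → Q (m+1)` for all `m ≥ 0` and
`∂(h)_j = d ∘ h_j + h_{j−1} ∘ d_j`. -/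
def IsCoboundary : ∀ n : ℕ, (∀ m, Q (n + m) →ₗ[A] Q m) → Prop
  | 0, g =>
    ∃ h : ∀ m, Q (0 + m) →ₗ[A] Q (m+1),
      g 0 = (d 0) ∘ₗ (h 0) ∧
      ∀ m, g (m+1) = (d (m+1)) ∘ₗ (h (m+1)) +
        (((h m) ∘ₗ (d (0 + m)) : Q (0 + (m+1)) →ₗ[A] Q (m+1)))
  | (k+1), g =>
    ∃ (h : ∀ m, Q ((k+1) + m) →ₗ[A] Q (m+1)) (h' : Q k →ₗ[A] Q 0),
      g 0 = (d 0) ∘ₗ (h 0) -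
        ((-1 : ℤ)^k) • ((h' ∘ₗ (d k) : Q ((k+1) + 0) →ₗ[A] Q 0)) ∧
      ∀ m, g (m+1) = (d (m+1)) ∘ₗ (h (m+1)) -
        ((-1 : ℤ)^k) • (((h m) ∘ₗ (d ((k+1) + m)) : Q ((k+1) + (m+1)) →ₗ[A] Q (m+1)))

end


private lemma auxDepChoice {T : ℕ → Sort*} {R : ∀ m, T m → T (m+1) → Prop}
    (t0 : T 0) (step : ∀ m (t : T m), ∃ t', R m t t') :
    ∃ s : ∀ m, T m, s 0 = t0 ∧ ∀ m, R m (s m) (s (m+1)) := by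
  choose f hf using step
  exact ⟨fun m => Nat.rec t0 f m, rfl, fun m => hf m _⟩

private lemma auxLift {R M N P : Type} [Ring R] [AddCommGroup M] [Module R M]
    [AddCommGroup N] [Module R N] [AddCommGroup P] [Module R P]
    (hP : Module.Projective R P) (φ : P →ₗ[R] M) (ψ : N →ₗ[R] M)
    (hle : LinearMap.range φ ≤ LinearMap.range ψ) :
    ∃ g : P →ₗ[R] N, ψ ∘ₗ g = φ := by
  haveI := hP
  obtain ⟨g, hg⟩ := Module.projective_lifting_property ψ.rangeRestrict
    (φ.codRestrict (LinearMap.range ψ) fun x => hle ⟨x, rfl⟩)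
    (LinearMap.surjective_rangeRestrict ψ)
  refine ⟨g, ?_⟩
  ext x
  exact congrArg Subtype.val (LinearMap.congr_fun hg x)

/-- Proposition 4.3, `Z^n = B^n ⊕ H`.  Let `(Q_•, d_•)` be a minimal
resolution of the trivial module `K = A/A₊` by projective left `A`-modules with `Q₀ = A`
(identified via `e`).  Let `H` be a `K`-subspace of the cocycles `Z^n ⊆ U^n` such that
`p : f ↦ ε ∘ f_n` restricts to a bijection from `H` onto `Hom_A(Q_n, K)`.  Then every
cocycle decomposes uniquely as a coboundary plus an element of `H`. -/
theorem stmt_18 (K : Type) [Field K] (A : Type) [Ring A] [Algebra K A]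
    (ε : A →ₐ[K] K)
    (Q : ℕ → Type) [∀ j, AddCommGroup (Q j)] [∀ j, Module A (Q j)]
    [∀ j, Module K (Q j)] [∀ j, IsScalarTower K A (Q j)] [∀ j, SMulCommClass A K (Q j)]
    (hproj : ∀ j, Module.Projective A (Q j))
    (d : ∀ j, Q (j+1) →ₗ[A] Q j)
    (e : Q 0 ≃ₗ[A] A)
    (hexact : ∀ j, LinearMap.range (d (j+1)) = LinearMap.ker (d j))
    (hd1 : Submodule.map (e : Q 0 →ₗ[A] A) (LinearMap.range (d 0)) =
      RingHom.ker (ε : A →+* K))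
    -- minimality : `im(d_j) ⊆ A₊ Q_{j-1}`
    (hmin : ∀ j, LinearMap.range (d j) ≤
      Submodule.span A {y : Q j | ∃ a ∈ RingHom.ker (ε : A →+* K), ∃ x : Q j, y = a • x})
    (n : ℕ)
    (H : Submodule K (∀ m, Q (n + m) →ₗ[A] Q m))
    -- `H` is contained in `Z^n`
    (hHZ : ∀ f ∈ H, IsCocycle A Q d n f)
    -- `p : f ↦ ε ∘ f_n` is injective on `H` ...
    (hinj : ∀ f ∈ H, ∀ g ∈ H,
      (∀ x : Q (n + 0), ε (e (f 0 x)) = ε (e (g 0 x))) → f = g)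
    -- ... and maps `H` onto `Hom_A(Q_n, K)` (`K` the trivial module, `A` acting via `ε`)
    (hsurj : ∀ φ : Q (n + 0) → K,
      ((∀ x y, φ (x + y) = φ x + φ y) ∧ (∀ (a : A) (x), φ (a • x) = ε a * φ x)) →
      ∃ f ∈ H, ∀ x, ε (e (f 0 x)) = φ x) :
    -- `Z^n = B^n + H` (with `B^n + H ⊆ Z^n`) ...
    (∀ f, IsCocycle A Q d n f ↔
      ∃ b h, IsCoboundary A Q d n b ∧ h ∈ H ∧ f = b + h) ∧
    -- ... and the sum is direct
    (∀ b b' h h', IsCoboundary A Q d n b → IsCoboundary A Q d n b' → h ∈ H → h' ∈ H →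
      b + h = b' + h' → b = b' ∧ h = h') := by
  classical
  -- d ∘ d = 0
  have hdd : ∀ j, (d j) ∘ₗ (d (j+1)) = 0 := by
    intro j
    ext x
    have hx : d (j+1) x ∈ LinearMap.ker (d j) := by
      rw [← hexact j]; exact ⟨x, rfl⟩
    simpa using hx
  -- characterization of range (d 0)
  have hker : ∀ z : Q 0, z ∈ LinearMap.range (d 0) ↔ ε (e z) = 0 := by
    intro z
    constructor
    · intro hz
      have hmem : e z ∈ Submodule.map (e : Q 0 →ₗ[A] A) (LinearMap.range (d 0)) :=
        ⟨z, hz, rfl⟩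
      rw [hd1] at hmem
      exact hmem
    · intro hz
      have hmem : (e z : A) ∈ RingHom.ker (ε : A →+* K) := hz
      rw [← hd1] at hmem
      obtain ⟨w, hw, hwz⟩ := hmem
      have hwz' : w = z := e.injective hwz
      rwa [← hwz']
  -- vanishing of ε ∘ e ∘ ψ on the A₊-span
  have hspan : ∀ (j : ℕ) (ψ : Q j →ₗ[A] Q 0) (y : Q j),
      y ∈ Submodule.span A {y : Q j | ∃ a ∈ RingHom.ker (ε : A →+* K), ∃ x : Q j, y = a • x} →
      ε (e (ψ y)) = 0 := by
    intro j ψ y hy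
    induction hy using Submodule.span_induction with
    | mem x hx =>
      obtain ⟨a, ha, x', rfl⟩ := hx
      rw [map_smul, map_smul, smul_eq_mul, map_mul, show ε a = 0 from ha, zero_mul]
    | zero => simp
    | add u v _ _ hu hv => rw [map_add, map_add, map_add, hu, hv, add_zero]
    | smul a u _ hu => rw [map_smul, map_smul, smul_eq_mul, map_mul, hu, mul_zero]
  -- coboundaries are killed by p
  have hp0 : ∀ b, IsCoboundary A Q d n b → ∀ x : Q (n+0), ε (e (b 0 x)) = 0 := by
    intro b hb x
    cases n with
    | zero =>
      obtain ⟨hh, hb1, _⟩ := hb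
      rw [hb1]
      exact (hker _).1 ⟨hh 0 x, rfl⟩
    | succ k =>
      obtain ⟨hh, h', hb1, _⟩ := hb
      have hx : b 0 x = d 0 (hh 0 x) - ((-1:ℤ)^k) • (h' (d k x)) := by
        have h0 := LinearMap.congr_fun hb1 x
        simpa using h0
      rw [hx, map_sub, map_sub, map_zsmul, map_zsmul]
      have h1 : ε (e (d 0 (hh 0 x))) = 0 := (hker _).1 ⟨hh 0 x, rfl⟩
      have h2 : ε (e (h' (d k x))) = 0 := hspan k h' (d k x) (hmin k ⟨x, rfl⟩)
      rw [h1, h2, smul_zero, sub_zero]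
  -- cocycles are closed under sub and add
  have hZsub : ∀ f g, IsCocycle A Q d n f → IsCocycle A Q d n g →
      IsCocycle A Q d n (f - g) := by
    intro f g hf hg m
    ext x
    have h1 := LinearMap.congr_fun (hf m) x
    have h2 := LinearMap.congr_fun (hg m) x
    simp only [LinearMap.comp_apply, LinearMap.smul_apply] at h1 h2 ⊢
    simp only [Pi.sub_apply, LinearMap.sub_apply, map_sub, h1, h2, smul_sub]
  have hZadd : ∀ f g, IsCocycle A Q d n f → IsCocycle A Q d n g →
      IsCocycle A Q d n (f + g) := by
    intro f g hf hg m
    ext x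
    have h1 := LinearMap.congr_fun (hf m) x
    have h2 := LinearMap.congr_fun (hg m) x
    simp only [LinearMap.comp_apply, LinearMap.smul_apply] at h1 h2 ⊢
    simp only [Pi.add_apply, LinearMap.add_apply, map_add, h1, h2, smul_add]
  -- coboundaries are cocycles
  have hBZ : ∀ b, IsCoboundary A Q d n b → IsCocycle A Q d n b := by
    intro b hb
    cases n with
    | zero =>
      obtain ⟨hh, hb1, hb2⟩ := hb
      intro m
      ext x
      simp only [LinearMap.comp_apply, LinearMap.smul_apply, pow_zero, one_smul]
      have e2 : b (m+1) x = d (m+1) (hh (m+1) x) + hh m (d (0+m) x) := by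
        have h0 := LinearMap.congr_fun (hb2 m) x
        simpa using h0
      have hz : d m (d (m+1) (hh (m+1) x)) = 0 := by
        have h0 := LinearMap.congr_fun (hdd m) (hh (m+1) x)
        simpa using h0
      rw [e2, map_add, hz, zero_add]
      -- ⊢ d m (hh m (d (0+m) x)) = b m (d (0+m) x)
      cases m with
      | zero =>
        show d 0 (hh 0 (d (0+0) x)) = b 0 (d (0+0) x)
        have e1 : b 0 (d (0+0) x) = d 0 (hh 0 (d (0+0) x)) := by
          have h0 := LinearMap.congr_fun hb1 (d (0+0) x)
          simpa using h0
        rw [e1]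
      | succ m' =>
        show d (m'+1) (hh (m'+1) (d (0+(m'+1)) x)) = b (m'+1) (d (0+(m'+1)) x)
        have e1 : b (m'+1) (d (0+(m'+1)) x) =
            d (m'+1) (hh (m'+1) (d (0+(m'+1)) x)) + hh m' (d (0+m') (d (0+(m'+1)) x)) := by
          have h0 := LinearMap.congr_fun (hb2 m') (d (0+(m'+1)) x)
          simpa using h0
        have hz2 : d (0+m') (d (0+(m'+1)) x) = 0 := LinearMap.congr_fun (hdd (0+m')) x
        rw [e1, hz2, map_zero, add_zero]
    | succ k =>
      obtain ⟨hh, h', hb1, hb2⟩ := hb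
      intro m
      ext x
      simp only [LinearMap.comp_apply, LinearMap.smul_apply]
      have e2 : b (m+1) x = d (m+1) (hh (m+1) x) - ((-1:ℤ)^k) • (hh m (d (k+1+m) x)) := by
        have h0 := LinearMap.congr_fun (hb2 m) x
        simpa using h0
      have hz : d m (d (m+1) (hh (m+1) x)) = 0 := by
        have h0 := LinearMap.congr_fun (hdd m) (hh (m+1) x)
        simpa using h0
      rw [e2, map_sub, map_zsmul, hz, zero_sub]
      have e3 : d m (hh m (d (k+1+m) x)) = b m (d (k+1+m) x) := by
        cases m with
        | zero =>
          show d 0 (hh 0 (d (k+1+0) x)) = b 0 (d (k+1+0) x)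
          have e1 : b 0 (d (k+1+0) x) =
              d 0 (hh 0 (d (k+1+0) x)) - ((-1:ℤ)^k) • (h' (d k (d (k+1+0) x))) := by
            have h0 := LinearMap.congr_fun hb1 (d (k+1+0) x)
            simpa using h0
          have hz2 : d k (d (k+1+0) x) = 0 := LinearMap.congr_fun (hdd k) x
          rw [e1, hz2, map_zero, smul_zero, sub_zero]
        | succ m' =>
          show d (m'+1) (hh (m'+1) (d (k+1+(m'+1)) x)) = b (m'+1) (d (k+1+(m'+1)) x)
          have e1 : b (m'+1) (d (k+1+(m'+1)) x) =
              d (m'+1) (hh (m'+1) (d (k+1+(m'+1)) x)) -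
                ((-1:ℤ)^k) • (hh m' (d (k+1+m') (d (k+1+(m'+1)) x))) := by
            have h0 := LinearMap.congr_fun (hb2 m') (d (k+1+(m'+1)) x)
            simpa using h0
          have hz2 : d (k+1+m') (d (k+1+(m'+1)) x) = 0 :=
            LinearMap.congr_fun (hdd (k+1+m')) x
          rw [e1, hz2, map_zero, smul_zero, sub_zero]
      rw [e3, pow_succ, mul_smul, neg_one_zsmul, smul_neg]
  -- the key construction: a cocycle killed by p is a coboundary
  have key : ∀ b : ∀ m, Q (n + m) →ₗ[A] Q m, IsCocycle A Q d n b →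
      (∀ x : Q (n+0), ε (e (b 0 x)) = 0) → IsCoboundary A Q d n b := by
    intro b hb hb0
    have hrange0 : LinearMap.range (b 0) ≤ LinearMap.range (d 0) := by
      rintro _ ⟨x, rfl⟩
      exact (hker _).2 (hb0 x)
    obtain ⟨h0, hh0⟩ := auxLift (hproj (n+0)) (b 0) (d 0) hrange0
    have inv0 : (b 0 - d 0 ∘ₗ h0) ∘ₗ d (n+0) = 0 := by
      rw [hh0, sub_self, LinearMap.zero_comp]
    have step : ∀ (m : ℕ)
        (t : {hm : Q (n+m) →ₗ[A] Q (m+1) // (b m - d m ∘ₗ hm) ∘ₗ d (n+m) = 0}),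
        ∃ t' : {hm : Q (n+(m+1)) →ₗ[A] Q (m+2) //
            (b (m+1) - d (m+1) ∘ₗ hm) ∘ₗ d (n+(m+1)) = 0},
        d (m+1) ∘ₗ t'.1 = b (m+1) -
          ((-1:ℤ)^n) • ((t.1 ∘ₗ d (n+m) : Q (n+(m+1)) →ₗ[A] Q (m+1))) := by
      intro m t
      set c : Q (n+(m+1)) →ₗ[A] Q (m+1) :=
        b (m+1) - ((-1:ℤ)^n) • ((t.1 ∘ₗ d (n+m) : Q (n+(m+1)) →ₗ[A] Q (m+1))) with hc_def
      have hc : d m ∘ₗ c = 0 := by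
        ext x
        have h1 : d m (b (m+1) x) = ((-1:ℤ)^n) • (b m (d (n+m) x)) := by
          have h0' := LinearMap.congr_fun (hb m) x
          simpa using h0'
        have h2 : b m (d (n+m) x) = d m (t.1 (d (n+m) x)) := by
          have h0' := LinearMap.congr_fun t.2 x
          simp only [LinearMap.comp_apply, LinearMap.sub_apply, LinearMap.zero_apply] at h0'
          exact sub_eq_zero.mp h0'
        simp only [LinearMap.comp_apply, LinearMap.zero_apply, hc_def, LinearMap.sub_apply,
          LinearMap.smul_apply]
        rw [map_sub, map_zsmul, h1, h2]
        exact sub_eq_zero.mpr rfl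
      have hcrange : LinearMap.range c ≤ LinearMap.range (d (m+1)) := by
        rw [hexact m]
        rintro _ ⟨x, rfl⟩
        have h0' := LinearMap.congr_fun hc x
        simp only [LinearMap.comp_apply, LinearMap.zero_apply] at h0'
        exact LinearMap.mem_ker.mpr h0'
      obtain ⟨g, hg⟩ := auxLift (hproj (n+(m+1))) c (d (m+1)) hcrange
      have hinv : (b (m+1) - d (m+1) ∘ₗ g) ∘ₗ d (n+(m+1)) = 0 := by
        rw [hg]
        ext x
        have hz : d (n+m) (d (n+(m+1)) x) = 0 := LinearMap.congr_fun (hdd (n+m)) x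
        show b (m+1) (d (n+(m+1)) x) -
          (b (m+1) (d (n+(m+1)) x) - ((-1:ℤ)^n) • t.1 (d (n+m) (d (n+(m+1)) x))) = 0
        rw [hz, map_zero, smul_zero, sub_zero, sub_self]
      exact ⟨⟨g, hinv⟩, hg⟩
    obtain ⟨s, hs0, hsR⟩ := auxDepChoice ⟨h0, inv0⟩ step
    have hs0' : (s 0).1 = h0 := by rw [hs0]
    cases n with
    | zero =>
      refine ⟨fun m => (s m).1, ?_, ?_⟩
      · show b 0 = d 0 ∘ₗ (s 0).1
        rw [hs0', hh0]
      · intro m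
        show b (m+1) = d (m+1) ∘ₗ (s (m+1)).1 +
          (((s m).1 ∘ₗ d (0+m) : Q (0+(m+1)) →ₗ[A] Q (m+1)))
        ext x
        have h := LinearMap.congr_fun (hsR m) x
        simp only [LinearMap.comp_apply, LinearMap.sub_apply, LinearMap.smul_apply,
          LinearMap.add_apply, pow_zero, one_smul] at h ⊢
        rw [h]
        abel
    | succ k =>
      refine ⟨fun m => (s m).1, 0, ?_, ?_⟩
      · show b 0 = d 0 ∘ₗ (s 0).1 - ((-1:ℤ)^k) • ((0 : Q k →ₗ[A] Q 0) ∘ₗ d k)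
        rw [hs0', LinearMap.zero_comp, smul_zero, sub_zero, hh0]
      · intro m
        show b (m+1) = d (m+1) ∘ₗ (s (m+1)).1 -
          ((-1:ℤ)^k) • (((s m).1 ∘ₗ d (k+1+m) : Q (k+1+(m+1)) →ₗ[A] Q (m+1)))
        ext x
        have h := LinearMap.congr_fun (hsR m) x
        simp only [LinearMap.comp_apply, LinearMap.sub_apply, LinearMap.smul_apply] at h ⊢
        rw [h, pow_succ, mul_smul, neg_one_zsmul, smul_neg, sub_neg_eq_add,
          add_sub_cancel_right]
  constructor
  · intro f
    constructor
    · intro hf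
      obtain ⟨g, hgH, hgp⟩ := hsurj (fun x => ε (e (f 0 x)))
        ⟨fun x y => by
          show ε (e (f 0 (x + y))) = ε (e (f 0 x)) + ε (e (f 0 y))
          rw [map_add, map_add, map_add],
         fun a x => by
          show ε (e (f 0 (a • x))) = ε a * ε (e (f 0 x))
          rw [map_smul, map_smul, smul_eq_mul, map_mul]⟩
      refine ⟨f - g, g, key (f - g) (hZsub f g hf (hHZ g hgH)) ?_, hgH, by abel⟩
      intro x
      simp only [Pi.sub_apply, LinearMap.sub_apply, map_sub]
      rw [hgp x, sub_self]
    · rintro ⟨b, h, hbB, hhH, rfl⟩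
      exact hZadd b h (hBZ b hbB) (hHZ h hhH)
  · intro b b' h h' hb hb' hh hh' heq
    have hph : ∀ x : Q (n+0), ε (e (h 0 x)) = ε (e (h' 0 x)) := by
      intro x
      have e0 := congrFun heq 0
      have ex : b 0 x + h 0 x = b' 0 x + h' 0 x := by
        have := LinearMap.congr_fun e0 x
        simpa using this
      have c1 : ε (e (b 0 x + h 0 x)) = ε (e (h 0 x)) := by
        rw [map_add, map_add, hp0 b hb x, zero_add]
      have c2 : ε (e (b' 0 x + h' 0 x)) = ε (e (h' 0 x)) := by
        rw [map_add, map_add, hp0 b' hb' x, zero_add]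
      rw [← c1, ← c2, ex]
    have hhh : h = h' := hinj h hh h' hh' hph
    subst hhh
    exact ⟨add_right_cancel heq, rfl⟩
end
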